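/- arXiv:1908.10724 — 3 statements merged into one kernel-verified Lean document; each statement's English description precedes it below -/
import Mathlib

section
/- For every u ∈ Conv_sc(ℝⁿ) there exists a sequence of functions u_k ∈ Conv_sc^{pa}(ℝⁿ) that epi-converges to u; here u ∈ Conv_sc^{pa}(ℝⁿ) means u ∈ Conv_sc(ℝⁿ) and there exist a polytope P, a polytopal partition {P₁,…,P_m} of P, and affine functions w₁,…,w_m : ℝⁿ → ℝ such that u = ⋀_{i=1}^m (w_i + I_{P_i}) (pointwise minimum). -/
open Filter Topology MeasureTheory

noncomputable section

/-- Euclidean space `ℝⁿ`. -/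
abbrev Vn (n : ℕ) := EuclideanSpace ℝ (Fin n)

/-- `u : ℝⁿ → ℝ ∪ {+∞}` (represented as an `EReal`-valued function that never
takes the value `⊥ = -∞`) is convex. -/
def IsConvexFn {n : ℕ} (u : Vn n → EReal) : Prop :=
  ∀ x y : Vn n, ∀ t : ℝ, 0 < t → t < 1 →
    u (t • x + (1 - t) • y) ≤ (t : EReal) * u x + ((1 - t : ℝ) : EReal) * u y

/-- `Conv(ℝⁿ)`: convex, lower semicontinuous, proper functions
`ℝⁿ → ℝ ∪ {+∞}`. -/
def ConvSet (n : ℕ) : Set (Vn n → EReal) :=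
  {u | IsConvexFn u ∧ LowerSemicontinuous u ∧ (∀ x, u x ≠ ⊥) ∧ (∃ x, u x ≠ ⊤)}

/-- `Conv_sc(ℝⁿ)`: super-coercive elements of `Conv(ℝⁿ)`, i.e.
`u(x)/|x| → +∞` as `|x| → +∞`. -/
def ConvSc (n : ℕ) : Set (Vn n → EReal) :=
  {u | u ∈ ConvSet n ∧
    ∀ M : ℝ, ∃ R : ℝ, ∀ x : Vn n, R ≤ ‖x‖ → ((M * ‖x‖ : ℝ) : EReal) ≤ u x}

/-- Epi-convergence of a sequence `uk` to `u`. -/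
def EpiConverges {n : ℕ} (uk : ℕ → Vn n → EReal) (u : Vn n → EReal) : Prop :=
  ∀ x : Vn n,
    (∀ xk : ℕ → Vn n, Tendsto xk atTop (𝓝 x) →
      u x ≤ liminf (fun k => uk k (xk k)) atTop) ∧
    (∃ xk : ℕ → Vn n, Tendsto xk atTop (𝓝 x) ∧
      Tendsto (fun k => uk k (xk k)) atTop (𝓝 (u x)))

/-- Continuity (with respect to epi-convergence) of a functional on a class `X`. -/
def ContinuousVal {n : ℕ} (X : Set (Vn n → EReal)) (Z : (Vn n → EReal) → ℝ) : Prop :=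
  ∀ (uk : ℕ → Vn n → EReal) (u : Vn n → EReal),
    (∀ k, uk k ∈ X) → u ∈ X → EpiConverges uk u →
      Tendsto (fun k => Z (uk k)) atTop (𝓝 (Z u))

/-- The valuation property on a class `X` (here `⊔`, `⊓` are the pointwise
maximum and minimum). -/
def IsValuation {n : ℕ} (X : Set (Vn n → EReal)) (Z : (Vn n → EReal) → ℝ) : Prop :=
  ∀ u v : Vn n → EReal, u ∈ X → v ∈ X → u ⊔ v ∈ X → u ⊓ v ∈ X →
    Z (u ⊔ v) + Z (u ⊓ v) = Z u + Z v

/-- Epi-translation invariance: invariance under `u ↦ u(· - x₀) + c`. -/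
def EpiTranslationInvariant {n : ℕ} (X : Set (Vn n → EReal)) (Z : (Vn n → EReal) → ℝ) : Prop :=
  ∀ u ∈ X, ∀ x₀ : Vn n, ∀ c : ℝ, Z (fun x => u (x - x₀) + (c : EReal)) = Z u

-- Epi-multiplication `λ ⊡ u`; for `λ = 0` it is the indicator of `{0}`.
open Classical in
def epiMul {n : ℕ} (l : ℝ) (u : Vn n → EReal) : Vn n → EReal :=
  if l = 0 then (fun x => if x = 0 then (0 : EReal) else ⊤)
  else fun x => (l : EReal) * u (l⁻¹ • x)

/-- `Z` is epi-homogeneous of degree `α`: `Z(λ ⊡ u) = λ^α Z(u)` for `λ > 0`. -/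
def EpiHomogeneous {n : ℕ} (X : Set (Vn n → EReal)) (Z : (Vn n → EReal) → ℝ) (α : ℝ) : Prop :=
  ∀ u ∈ X, ∀ l : ℝ, 0 < l → Z (epiMul l u) = l ^ α * Z u

/-- A polytope: the convex hull of a nonempty finite set of points. -/
def IsPolytope {n : ℕ} (P : Set (Vn n)) : Prop :=
  ∃ s : Finset (Vn n), s.Nonempty ∧ P = convexHull ℝ (s : Set (Vn n))

-- The (convex) indicator function `I_A`: `0` on `A` and `+∞` off `A`.
open Classical in
def indE {n : ℕ} (A : Set (Vn n)) : Vn n → EReal :=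
  fun x => if x ∈ A then (0 : EReal) else ⊤

/-- `Conv_sc^{pa}(ℝⁿ)`: functions `u ∈ Conv_sc(ℝⁿ)` of the form
`u = ⋀ᵢ (wᵢ + I_{Pᵢ})` with `wᵢ` affine and `{P₁,…,P_m}` a polytopal
partition of a polytope `P = ⋃ᵢ Pᵢ`. -/
def ConvScPA (n : ℕ) : Set (Vn n → EReal) :=
  {u | u ∈ ConvSc n ∧
    ∃ (m : ℕ) (P : Fin (m + 1) → Set (Vn n)) (w : Fin (m + 1) → (Vn n →ᵃ[ℝ] ℝ)),
      (∀ i, IsPolytope (P i)) ∧ IsPolytope (⋃ i, P i) ∧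
      (∀ i j, i ≠ j → interior (P i) ∩ interior (P j) = ∅) ∧
      u = fun x => ⨅ i, ((w i x : EReal) + indE (P i) x)}

namespace PAApprox

variable {n : ℕ}

local instance : DecidableEq (Vn n) := Classical.decEq _

/-- The epigraph. -/
def Epi (u : Vn n → EReal) : Set (Vn n × ℝ) := {p | u p.1 ≤ (p.2 : EReal)}

lemma continuous_affine (w : Vn n →ᵃ[ℝ] ℝ) : Continuous w := by
  rw [w.decomp]
  exact (w.linear.continuous_of_finiteDimensional).add continuous_const

lemma convex_epi {u : Vn n → EReal} (hc : IsConvexFn u) : Convex ℝ (Epi u) := by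
  rintro ⟨x, a⟩ hx ⟨y, b⟩ hy s t hs ht hst
  simp only [Epi, Set.mem_setOf_eq] at hx hy ⊢
  rcases eq_or_lt_of_le hs with h0 | hs
  · have ht1 : t = 1 := by linarith
    simp only [← h0, ht1, zero_smul, one_smul, Prod.smul_mk, Prod.mk_add_mk, zero_add]
    simpa using hy
  rcases eq_or_lt_of_le ht with h0 | ht
  · have hs1 : s = 1 := by linarith
    simp only [← h0, hs1, zero_smul, one_smul, Prod.smul_mk, Prod.mk_add_mk, add_zero]
    simpa using hx
  have hs1 : s < 1 := by linarith
  have h1s : 1 - s = t := by linarith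
  have harg : (s • (x, a) + t • (y, b) : Vn n × ℝ).1 = s • x + t • y := rfl
  have hsnd : (s • (x, a) + t • (y, b) : Vn n × ℝ).2 = s * a + t * b := rfl
  rw [harg, hsnd]
  have h1 : (s : EReal) * u x ≤ (s : EReal) * (a : EReal) :=
    mul_le_mul_of_nonneg_left hx (by exact_mod_cast hs.le)
  have h2 : (t : EReal) * u y ≤ (t : EReal) * (b : EReal) :=
    mul_le_mul_of_nonneg_left hy (by exact_mod_cast ht.le)
  calc u (s • x + t • y) ≤ (s : EReal) * u x + (t : EReal) * u y := by
        have := hc x y s hs hs1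
        rwa [h1s] at this
    _ ≤ (s : EReal) * a + (t : EReal) * b := add_le_add h1 h2
    _ = ((s * a + t * b : ℝ) : EReal) := by rw [EReal.coe_add, EReal.coe_mul, EReal.coe_mul]

lemma closed_epi {u : Vn n → EReal} (hl : LowerSemicontinuous u) : IsClosed (Epi u) := by
  rw [← isOpen_compl_iff, isOpen_iff_forall_mem_open]
  rintro ⟨x, t⟩ hp
  simp only [Epi, Set.mem_compl_iff, Set.mem_setOf_eq, not_le] at hp
  obtain ⟨z, hz1, hz2⟩ := exists_between hp
  have hzt : z ≠ ⊤ := (hz2.trans_le le_top).ne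
  have hzb : z ≠ ⊥ := (lt_of_le_of_lt bot_le hz1).ne'
  lift z to ℝ using ⟨hzt, hzb⟩
  refine ⟨(fun q : Vn n × ℝ => q.1) ⁻¹' {y | (z : EReal) < u y} ∩
      (fun q : Vn n × ℝ => q.2) ⁻¹' Set.Iio z, ?_, ?_, ?_⟩
  · rintro ⟨x', t'⟩ ⟨h1, h2⟩
    simp only [Set.mem_preimage, Set.mem_setOf_eq] at h1
    simp only [Set.mem_preimage, Set.mem_Iio] at h2
    simp only [Epi, Set.mem_compl_iff, Set.mem_setOf_eq, not_le]
    exact lt_trans (by exact_mod_cast h2) h1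
  · exact IsOpen.inter ((hl.isOpen_preimage _).preimage continuous_fst)
      (isOpen_Iio.preimage continuous_snd)
  · constructor
    · simpa using hz2
    · simpa using (by exact_mod_cast hz1 : (t : ℝ) < z)

/-- Affine map from a continuous linear map plus a constant. -/
def affOf (g : Vn n →L[ℝ] ℝ) (b : ℝ) : Vn n →ᵃ[ℝ] ℝ where
  toFun := fun x => g x + b
  linear := (g : Vn n →ₗ[ℝ] ℝ)
  map_vadd' := by
    intro p v
    simp only [vadd_eq_add, map_add, ContinuousLinearMap.coe_coe]
    ring

@[simp] lemma affOf_apply (g : Vn n →L[ℝ] ℝ) (b : ℝ) (x : Vn n) : affOf g b x = g x + b := rfl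

lemma sep_aux {u : Vn n → EReal} (hc : IsConvexFn u) (hl : LowerSemicontinuous u)
    (hb : ∀ x, u x ≠ ⊥) (hne : ∃ x, u x ≠ ⊤) (x₀ : Vn n) (r : ℝ) (hr : (r : EReal) < u x₀) :
    ∃ (g : Vn n →L[ℝ] ℝ) (c s : ℝ), 0 ≤ c ∧ (∀ p ∈ Epi u, s < g p.1 + c * p.2) ∧
      g x₀ + c * r < s := by
  obtain ⟨x', hx'⟩ := hne
  set t' : ℝ := (u x').toReal with ht'
  have hux' : u x' = (t' : EReal) := (EReal.coe_toReal hx' (hb x')).symm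
  have hmem : (x', t') ∈ Epi u := by simp [Epi, hux']
  have hnmem : (x₀, r) ∉ Epi u := by simp [Epi, not_le, hr]
  obtain ⟨f, s, hfs, hsep⟩ :=
    geometric_hahn_banach_point_closed (convex_epi hc) (closed_epi hl) hnmem
  set g : Vn n →L[ℝ] ℝ := f.comp (ContinuousLinearMap.inl ℝ (Vn n) ℝ) with hg
  set c : ℝ := f (0, 1) with hcdef
  have key : ∀ p : Vn n × ℝ, f p = g p.1 + c * p.2 := by
    intro p
    have hp : p = ((p.1, 0) : Vn n × ℝ) + p.2 • ((0 : Vn n), (1 : ℝ)) := by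
      ext <;> simp
    calc f p = f ((p.1, 0) + p.2 • ((0 : Vn n), (1 : ℝ))) := by rw [← hp]
      _ = f (p.1, 0) + p.2 * f (0, 1) := by rw [map_add, _root_.map_smul, smul_eq_mul]
      _ = g p.1 + c * p.2 := by rw [hg, hcdef]; simp [mul_comm]
  have hsep' : ∀ p ∈ Epi u, s < g p.1 + c * p.2 := by
    intro p hp; rw [← key]; exact hsep p hp
  have hc0 : 0 ≤ c := by
    by_contra hcneg
    push_neg at hcneg
    set Δ : ℝ := (s - (g x' + c * t') - 1) / c with hΔ
    have hs1 : s < g x' + c * t' := by simpa using hsep' _ hmem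
    have hΔpos : 0 ≤ Δ := by
      apply le_of_lt
      apply div_pos_of_neg_of_neg _ hcneg
      linarith
    have hmem2 : (x', t' + Δ) ∈ Epi u := by
      simp only [Epi, Set.mem_setOf_eq, hux']
      exact_mod_cast le_add_of_nonneg_right hΔpos
    have := hsep' _ hmem2
    simp only at this
    have hcd : c * Δ = s - (g x' + c * t') - 1 := by
      rw [hΔ, mul_div_cancel₀ _ (ne_of_lt hcneg)]
    have : s < g x' + c * (t' + Δ) := this
    rw [mul_add, hcd] at this
    linarith
  refine ⟨g, c, s, hc0, hsep', ?_⟩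
  have := key (x₀, r)
  simp only at this
  rw [← this]
  exact hfs

lemma exists_minorant {u : Vn n → EReal} (hu : u ∈ ConvSet n) :
    ∃ w : Vn n →ᵃ[ℝ] ℝ, ∀ x, (w x : EReal) ≤ u x := by
  obtain ⟨hc, hl, hb, hne⟩ := hu
  obtain ⟨x', hx'⟩ := hne
  set t' : ℝ := (u x').toReal with ht'
  have hux' : u x' = (t' : EReal) := (EReal.coe_toReal hx' (hb x')).symm
  have hr : ((t' - 1 : ℝ) : EReal) < u x' := by
    rw [hux']; exact_mod_cast sub_one_lt t'
  obtain ⟨g, c, s, hc0, hsep, hpt⟩ := sep_aux hc hl hb ⟨x', hx'⟩ x' (t' - 1) hr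
  have hcpos : 0 < c := by
    rcases eq_or_lt_of_le hc0 with h | h
    · exfalso
      have h1 := hsep (x', t') (by simp [Epi, hux'])
      simp only [← h, zero_mul, add_zero] at h1 hpt
      linarith
    · exact h
  refine ⟨affOf (-(c⁻¹) • g) (s / c), ?_⟩
  intro x
  by_cases hx : u x = ⊤
  · rw [hx]; exact le_top
  · have hux : u x = ((u x).toReal : EReal) := (EReal.coe_toReal hx (hb x)).symm
    have h1 := hsep (x, (u x).toReal) (by simp [Epi, ← hux])
    simp only at h1
    have : affOf (-(c⁻¹) • g) (s / c) x = (s - g x) / c := by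
      simp only [affOf_apply, ContinuousLinearMap.smul_apply, smul_eq_mul]
      field_simp
      ring
    rw [this, hux]
    have : (s - g x) / c < (u x).toReal := by
      rw [div_lt_iff₀ hcpos]
      linarith
    exact_mod_cast this.le

lemma exists_minorant_gt {u : Vn n → EReal} (hu : u ∈ ConvSet n) (x₀ : Vn n) (r : ℝ)
    (hr : (r : EReal) < u x₀) :
    ∃ w : Vn n →ᵃ[ℝ] ℝ, (∀ x, (w x : EReal) ≤ u x) ∧ r < w x₀ := by
  obtain ⟨hc, hl, hb, hne⟩ := hu
  obtain ⟨g, c, s, hc0, hsep, hpt⟩ := sep_aux hc hl hb hne x₀ r hr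
  rcases eq_or_lt_of_le hc0 with hczero | hcpos
  · -- vertical hyperplane: use an auxiliary minorant
    obtain ⟨w₀, hw₀⟩ := exists_minorant (⟨hc, hl, hb, hne⟩ : u ∈ ConvSet n)
    have hsep0 : ∀ x, u x ≠ ⊤ → s < g x := by
      intro x hx
      have hux : u x = ((u x).toReal : EReal) := (EReal.coe_toReal hx (hb x)).symm
      have := hsep (x, (u x).toReal) (by simp [Epi, ← hux])
      simpa [← hczero] using this
    have hpt0 : g x₀ < s := by simpa [← hczero] using hpt
    obtain ⟨l, hlgt, hl0⟩ : ∃ l : ℝ, (r - w₀ x₀) / (s - g x₀) < l ∧ 0 < l := by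
      obtain ⟨l, hl⟩ := exists_gt (max 0 ((r - w₀ x₀) / (s - g x₀)))
      exact ⟨l, lt_of_le_of_lt (le_max_right _ _) hl, lt_of_le_of_lt (le_max_left _ _) hl⟩
    have hsg : 0 < s - g x₀ := by linarith
    have hkey : r - w₀ x₀ < l * (s - g x₀) := by
      rw [div_lt_iff₀ hsg] at hlgt; linarith
    refine ⟨{ toFun := fun x => w₀ x + l * (s - g x),
              linear := w₀.linear - l • (g : Vn n →ₗ[ℝ] ℝ),
              map_vadd' := ?_ }, ?_, ?_⟩
    · intro p v
      have h0 : w₀ (v + p) = w₀.linear v + w₀ p := by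
        have h := w₀.map_vadd p v
        simpa using h
      simp only [vadd_eq_add, map_add, LinearMap.sub_apply, LinearMap.smul_apply,
        ContinuousLinearMap.coe_coe, smul_eq_mul, h0]
      ring
    · intro x
      by_cases hx : u x = ⊤
      · rw [hx]; exact le_top
      · have h1 : s < g x := hsep0 x hx
        have h2 : (w₀ x : EReal) ≤ u x := hw₀ x
        have h3 : w₀ x + l * (s - g x) ≤ w₀ x := by nlinarith
        calc ((w₀ x + l * (s - g x) : ℝ) : EReal) ≤ (w₀ x : EReal) := by exact_mod_cast h3
          _ ≤ u x := h2
    · show r < w₀ x₀ + l * (s - g x₀)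
      linarith
  · refine ⟨affOf (-(c⁻¹) • g) (s / c), ?_, ?_⟩
    · intro x
      by_cases hx : u x = ⊤
      · rw [hx]; exact le_top
      · have hux : u x = ((u x).toReal : EReal) := (EReal.coe_toReal hx (hb x)).symm
        have h1 := hsep (x, (u x).toReal) (by simp [Epi, ← hux])
        simp only at h1
        have heq : affOf (-(c⁻¹) • g) (s / c) x = (s - g x) / c := by
          simp only [affOf_apply, ContinuousLinearMap.smul_apply, smul_eq_mul]
          field_simp
          ring
        rw [heq, hux]
        have : (s - g x) / c < (u x).toReal := by
          rw [div_lt_iff₀ hcpos]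
          linarith
        exact_mod_cast this.le
    · have heq : affOf (-(c⁻¹) • g) (s / c) x₀ = (s - g x₀) / c := by
        simp only [affOf_apply, ContinuousLinearMap.smul_apply, smul_eq_mul]
        field_simp
        ring
      rw [heq, lt_div_iff₀ hcpos]
      linarith

lemma exists_seq_minorants {u : Vn n → EReal} (hu : u ∈ ConvSet n) :
    ∃ w : ℕ → (Vn n →ᵃ[ℝ] ℝ), (∀ j x, ((w j x : ℝ) : EReal) ≤ u x) ∧
      ∀ x, (⨆ j, ((w j x : ℝ) : EReal)) = u x := by
  set A : Set (Vn n →ᵃ[ℝ] ℝ) := {w | ∀ x, ((w x : ℝ) : EReal) ≤ u x}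
  obtain ⟨w₀, hw₀⟩ := exists_minorant hu
  have hTq : ∀ q : ℚ, ∃ T : Set A, T.Countable ∧
      ⋃ w ∈ T, {x : Vn n | (q : ℝ) < (w : Vn n →ᵃ[ℝ] ℝ) x} =
      ⋃ w : A, {x : Vn n | (q : ℝ) < (w : Vn n →ᵃ[ℝ] ℝ) x} := by
    intro q
    apply TopologicalSpace.isOpen_iUnion_countable
    intro w
    exact isOpen_lt continuous_const (continuous_affine (w : Vn n →ᵃ[ℝ] ℝ))
  choose T hTc hTeq using hTq
  set S : Set (Vn n →ᵃ[ℝ] ℝ) := (⋃ q : ℚ, Subtype.val '' T q) ∪ {w₀} with hS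
  have hScount : S.Countable :=
    ((Set.countable_iUnion fun q => (hTc q).image _).union (Set.countable_singleton _))
  have hSne : S.Nonempty := ⟨w₀, Set.mem_union_right _ rfl⟩
  have hSA : S ⊆ A := by
    rintro w (hw | hw)
    · obtain ⟨q, hq⟩ := Set.mem_iUnion.1 hw
      obtain ⟨⟨w', hw'⟩, _, rfl⟩ := hq
      exact hw'
    · rw [Set.mem_singleton_iff.1 hw]; exact hw₀
  obtain ⟨f, hf⟩ := hScount.exists_eq_range hSne
  refine ⟨f, ?_, ?_⟩
  · intro j x
    have : f j ∈ S := by rw [hf]; exact Set.mem_range_self j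
    exact hSA this x
  · intro x
    apply le_antisymm
    · exact iSup_le fun j => hSA (by rw [hf]; exact Set.mem_range_self j) x
    · by_contra hcon
      push_neg at hcon
      obtain ⟨q, hq1, hq2⟩ := EReal.exists_rat_btwn_of_lt hcon
      obtain ⟨w', hw'min, hw'gt⟩ := exists_minorant_gt hu x (q : ℝ) hq2
      have hxmem : x ∈ ⋃ w : A, {y : Vn n | (q : ℝ) < (w : Vn n →ᵃ[ℝ] ℝ) y} :=
        Set.mem_iUnion.2 ⟨⟨w', hw'min⟩, hw'gt⟩
      rw [← hTeq q] at hxmem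
      simp only [Set.mem_iUnion, Set.mem_setOf_eq] at hxmem
      obtain ⟨w'', hw''T, hw''gt⟩ := hxmem
      have hw''S : (w'' : Vn n →ᵃ[ℝ] ℝ) ∈ S :=
        Set.mem_union_left _ (Set.mem_iUnion.2 ⟨q, Set.mem_image_of_mem _ hw''T⟩)
      rw [hf] at hw''S
      obtain ⟨j, hj⟩ := hw''S
      have : ((q : ℝ) : EReal) < ⨆ j, ((f j x : ℝ) : EReal) := by
        refine lt_of_lt_of_le ?_ (le_iSup (fun j => ((f j x : ℝ) : EReal)) j)
        rw [hj]
        exact_mod_cast hw''gt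
      exact absurd (this.trans hq1) (lt_irrefl _)

/-- A nonempty bounded intersection of finitely many affine halfspaces is a polytope. -/
lemma isPolytope_of_halfspaces {ι : Type} [Fintype ι] (g : ι → (Vn n →ᵃ[ℝ] ℝ))
    (K : Set (Vn n)) (hK : ∀ x, x ∈ K ↔ ∀ i, g i x ≤ 0)
    (hbd : Bornology.IsBounded K) (hne : K.Nonempty) : IsPolytope K := by
  have hKeq : K = ⋂ i, (g i) ⁻¹' Set.Iic 0 := by
    ext x; simp [hK x, Set.mem_iInter]
  have hclosed : IsClosed K := by
    rw [hKeq]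
    exact isClosed_iInter fun i => IsClosed.preimage (continuous_affine (g i)) isClosed_Iic
  have hconv : Convex ℝ K := by
    rw [hKeq]
    exact convex_iInter fun i => (convex_Iic (0:ℝ)).affine_preimage (g i)
  have hcomp : IsCompact K := Metric.isCompact_of_isClosed_isBounded hclosed hbd
  -- extreme points are finite
  set E : Set (Vn n) := K.extremePoints ℝ with hE
  have hfin : E.Finite := by
    have hinj : Set.InjOn (fun x => {i | g i x = 0}) E := by
      intro x hx y hy hact
      by_contra hxy
      obtain ⟨hxK, hxext⟩ := (mem_extremePoints).1 hx
      have hyK : y ∈ K := ((mem_extremePoints).1 hy).1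
      set d : Vn n := x - y with hd
      have hdne : d ≠ 0 := sub_ne_zero.2 hxy
      set b : ι → ℝ := fun i => g i x - g i y with hb
      -- choose ε
      set F : ι → ℝ := fun i => if h : g i x < 0 ∧ b i ≠ 0 then (-g i x) / |b i| else 1 with hF
      set s : Finset ℝ := insert (1:ℝ) (Finset.image F Finset.univ) with hs
      have hsne : s.Nonempty := ⟨1, Finset.mem_insert_self _ _⟩
      set ε : ℝ := s.min' hsne with hε
      have hεpos : 0 < ε := by
        rw [hε, Finset.lt_min'_iff]
        intro m hm
        rw [hs] at hm
        rcases Finset.mem_insert.1 hm with h | h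
        · rw [h]; norm_num
        · obtain ⟨i, _, hFi⟩ := Finset.mem_image.1 h
          rw [← hFi, hF]
          show 0 < if h : g i x < 0 ∧ b i ≠ 0 then -g i x / |b i| else 1
          by_cases hcond : g i x < 0 ∧ b i ≠ 0
          · rw [dif_pos hcond]
            exact div_pos (neg_pos.2 hcond.1) (abs_pos.2 hcond.2)
          · rw [dif_neg hcond]
            norm_num
      have hεF : ∀ i, ε ≤ F i := by
        intro i
        apply Finset.min'_le
        exact Finset.mem_insert_of_mem (Finset.mem_image_of_mem F (Finset.mem_univ i))
      have hkey : ∀ i, g i x + ε * |b i| ≤ 0 := by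
        intro i
        rcases eq_or_ne (b i) 0 with hbi | hbi
        · have : g i x ≤ 0 := (hK x).1 hxK i
          rw [hbi]; simpa using this
        · have hgi : g i x < 0 := by
            rcases lt_or_eq_of_le ((hK x).1 hxK i) with h | h
            · exact h
            · exfalso
              have hsets : ({j | g j x = 0} : Set ι) = {j | g j y = 0} := hact
              have hyact : g i y = 0 := by
                have hmem : i ∈ ({j | g j x = 0} : Set ι) := h
                rw [hsets] at hmem
                exact hmem
              exact hbi (by rw [hb]; simp [← h, hyact])
          have hFi : F i = (-g i x) / |b i| := by rw [hF]; simp [hgi, hbi]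
          have h1 : ε ≤ (-g i x) / |b i| := by rw [← hFi]; exact hεF i
          have h2 : 0 < |b i| := abs_pos.2 hbi
          rw [le_div_iff₀ h2] at h1
          linarith
      have haff : ∀ (i : ι) (t : ℝ), g i (x + t • d) = g i x + t * b i := by
        intro i t
        have h1 : g i (t • d +ᵥ x) = (g i).linear (t • d) +ᵥ g i x := (g i).map_vadd x (t • d)
        have h2 : (g i).linear d = g i x - g i y := by
          have := (g i).linearMap_vsub x y
          simpa [hd] using this
        have h3 : x + t • d = t • d +ᵥ x := by rw [vadd_eq_add, add_comm]
        rw [h3, h1, _root_.map_smul, h2, vadd_eq_add, smul_eq_mul, hb, add_comm]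
      have hzp : x + ε • d ∈ K := by
        rw [hK]
        intro i
        rw [haff i ε]
        calc g i x + ε * b i ≤ g i x + ε * |b i| := by
              have := le_abs_self (b i); nlinarith
          _ ≤ 0 := hkey i
      have hzm : x + (-ε) • d ∈ K := by
        rw [hK]
        intro i
        rw [haff i (-ε)]
        calc g i x + (-ε) * b i ≤ g i x + ε * |b i| := by
              have := neg_abs_le (b i); nlinarith
          _ ≤ 0 := hkey i
      have hseg : x ∈ openSegment ℝ (x + (-ε) • d) (x + ε • d) := by
        refine ⟨1/2, 1/2, by norm_num, by norm_num, by norm_num, ?_⟩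
        module
      have := hxext _ hzm _ hzp hseg
      have h0 : x + (-ε) • d = x := this.1
      have : (-ε) • d = 0 := by
        have := congrArg (fun z => z - x) h0
        simpa [add_sub_cancel_left] using this
      rcases smul_eq_zero.1 this with h | h
      · rw [neg_eq_zero] at h
        exact absurd h (ne_of_gt hεpos)
      · exact hdne h
    have hfinim : ((fun x => {i | g i x = 0}) '' E).Finite := Set.toFinite _
    exact Set.Finite.of_finite_image hfinim hinj
  have hKM : closure (convexHull ℝ E) = K := closure_convexHull_extremePoints hcomp hconv
  have hclosedhull : IsClosed (convexHull ℝ E) := hfin.isClosed_convexHull (𝕜 := ℝ)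
  have hKhull : convexHull ℝ E = K := by rw [← hclosedhull.closure_eq, hKM]
  have hEne : E.Nonempty := by
    rcases Set.eq_empty_or_nonempty E with h | h
    · exfalso
      rw [h] at hKhull
      simp only [convexHull_empty] at hKhull
      exact hne.ne_empty hKhull.symm
    · exact h
  refine ⟨hfin.toFinset, ?_, ?_⟩
  · simpa [Set.Finite.toFinset] using hEne
  · rw [Set.Finite.coe_toFinset, hKhull]

/-! ### The simplex -/

def sVtx (n : ℕ) (R : ℝ) : Option (Fin n) → Vn n
  | none => WithLp.toLp 2 (fun _ => -R)
  | some j => WithLp.toLp 2 (fun i => if j = i then (n : ℝ) * R else -R)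

def sSet (n : ℕ) (R : ℝ) : Set (Vn n) := {x | (∀ i, -R ≤ x i) ∧ ∑ i, x i ≤ R}

lemma convex_sSet (R : ℝ) : Convex ℝ (sSet n R) := by
  rintro x ⟨hx1, hx2⟩ y ⟨hy1, hy2⟩ a b ha hb hab
  constructor
  · intro i
    have hxi := hx1 i
    have hyi := hy1 i
    have hco : (a • x + b • y) i = a * x i + b * y i := rfl
    rw [hco]
    have h1 : a * (-R) ≤ a * x i := mul_le_mul_of_nonneg_left hxi ha
    have h2 : b * (-R) ≤ b * y i := mul_le_mul_of_nonneg_left hyi hb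
    have h3 : a * (-R) + b * (-R) = -R := by rw [← add_mul, hab]; ring
    linarith
  · have h1 : ∑ i, (a • x + b • y) i = ∑ i, (a * x i + b * y i) :=
      Finset.sum_congr rfl (fun i _ => rfl)
    rw [h1, Finset.sum_add_distrib, ← Finset.mul_sum, ← Finset.mul_sum]
    have hs1 : a * ∑ i, x i ≤ a * R := mul_le_mul_of_nonneg_left hx2 ha
    have hs2 : b * ∑ i, y i ≤ b * R := mul_le_mul_of_nonneg_left hy2 hb
    have hs3 : a * R + b * R = R := by rw [← add_mul, hab]; ring
    linarith

lemma sum_ite_vtx (R : ℝ) (j : Fin n) :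
    ∑ i : Fin n, (if j = i then (n : ℝ) * R else -R) = R := by
  have h1 : ∀ i : Fin n, (if j = i then (n : ℝ) * R else -R) =
      (-R) + (if j = i then (n : ℝ) * R + R else 0) := by
    intro i; by_cases h : j = i <;> simp [h]
  rw [Finset.sum_congr rfl (fun i _ => h1 i), Finset.sum_add_distrib,
    Finset.sum_ite_eq Finset.univ j (fun _ => (n : ℝ) * R + R)]
  simp [Finset.sum_const, Finset.card_univ]

lemma sVtx_mem {R : ℝ} (hR : 0 ≤ R) (o : Option (Fin n)) : sVtx n R o ∈ sSet n R := by
  cases o with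
  | none =>
    constructor
    · intro i; simp [sVtx]
    · show ∑ i : Fin n, (-R) ≤ R
      rw [Finset.sum_const, Finset.card_univ, Fintype.card_fin, nsmul_eq_mul]
      have hn : (0:ℝ) ≤ (n:ℝ) := Nat.cast_nonneg n
      nlinarith
  | some j =>
    constructor
    · intro i
      show -R ≤ if j = i then (n : ℝ) * R else -R
      by_cases h : j = i
      · rw [if_pos h]
        nlinarith [Nat.cast_nonneg (α := ℝ) n]
      · rw [if_neg h]
    · show ∑ i : Fin n, (if j = i then (n : ℝ) * R else -R) ≤ R
      rw [sum_ite_vtx]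

lemma apply_sum {ι : Type*} (s : Finset ι) (f : ι → Vn n) (i : Fin n) :
    (∑ o ∈ s, f o) i = ∑ o ∈ s, f o i :=
  map_sum (EuclideanSpace.projₗ (𝕜 := ℝ) i) f s

lemma sSet_subset_hull {R : ℝ} (hR : 0 < R) :
    sSet n R ⊆ convexHull ℝ
      ((Finset.image (sVtx n R) Finset.univ : Finset (Vn n)) : Set (Vn n)) := by
  intro x hx
  obtain ⟨hx1, hx2⟩ := hx
  have hpos : (0:ℝ) < ((n : ℝ) + 1) * R := by positivity
  set lam : Option (Fin n) → ℝ := fun o =>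
    Option.rec (1 - ∑ j, (x j + R) / (((n : ℝ) + 1) * R))
      (fun j => (x j + R) / (((n : ℝ) + 1) * R)) o with hlam
  have hlam_some : ∀ j, lam (some j) = (x j + R) / (((n : ℝ) + 1) * R) := fun j => rfl
  have hlam_none : lam none = 1 - ∑ j, (x j + R) / (((n : ℝ) + 1) * R) := rfl
  have hsum_some : ∑ j, lam (some j) = (∑ j, x j + (n : ℝ) * R) / (((n : ℝ) + 1) * R) := by
    rw [Finset.sum_congr rfl (fun j _ => hlam_some j), ← Finset.sum_div,
      Finset.sum_add_distrib, Finset.sum_const, Finset.card_univ]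
    simp [Fintype.card_fin]
  have hnonneg : ∀ o, 0 ≤ lam o := by
    intro o
    cases o with
    | none =>
      rw [hlam_none]
      have : ∑ j, lam (some j) ≤ 1 := by
        rw [hsum_some, div_le_one hpos]
        linarith
      have h2 : ∑ j, (x j + R) / (((n : ℝ) + 1) * R) = ∑ j, lam (some j) :=
        Finset.sum_congr rfl (fun j _ => (hlam_some j).symm)
      rw [h2]
      linarith
    | some j =>
      rw [hlam_some]
      exact div_nonneg (by linarith [hx1 j]) hpos.le
  have hsum : ∑ o, lam o = 1 := by
    rw [Fintype.sum_option, hlam_none]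
    ring
  have hcm : Finset.univ.centerMass lam (sVtx n R) = x := by
    rw [Finset.centerMass_eq_of_sum_1 _ _ hsum]
    apply PiLp.ext
    intro i
    rw [apply_sum]
    have hterm : ∀ o, (lam o • sVtx n R o) i = lam o * sVtx n R o i := fun o => rfl
    rw [Finset.sum_congr rfl (fun o _ => hterm o), Fintype.sum_option]
    have hvn : sVtx n R none i = -R := rfl
    have hvs : ∀ j, sVtx n R (some j) i =
        (-R) + (if j = i then ((n : ℝ) + 1) * R else 0) := by
      intro j
      show (if j = i then (n : ℝ) * R else -R) = _
      by_cases h : j = i <;> simp [h] <;> ring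
    rw [hvn]
    rw [Finset.sum_congr rfl (fun j _ => by rw [hvs j])]
    have hsplit : ∑ j, lam (some j) * ((-R) + (if j = i then ((n : ℝ) + 1) * R else 0)) =
        (∑ j, lam (some j) * (-R)) + ∑ j, (if j = i then lam (some j) * (((n : ℝ) + 1) * R) else 0) := by
      rw [← Finset.sum_add_distrib]
      refine Finset.sum_congr rfl (fun j _ => ?_)
      by_cases h : j = i <;> simp [h] <;> ring
    rw [hsplit, Finset.sum_ite_eq' Finset.univ i (fun j => lam (some j) * (((n : ℝ) + 1) * R))]
    simp only [Finset.mem_univ, if_true]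
    have hlami : lam (some i) * (((n : ℝ) + 1) * R) = x i + R := by
      rw [hlam_some, div_mul_cancel₀]
      exact ne_of_gt hpos
    rw [← Finset.sum_mul, hlami, hlam_none]
    ring
  have hmass : Finset.univ.centerMass lam (sVtx n R) ∈ convexHull ℝ
      ((Finset.image (sVtx n R) Finset.univ : Finset (Vn n)) : Set (Vn n)) :=
    Finset.centerMass_mem_convexHull _ (fun o _ => hnonneg o) (by rw [hsum]; norm_num)
      (fun o _ => Finset.mem_coe.2 (Finset.mem_image_of_mem _ (Finset.mem_univ o)))
  rw [hcm] at hmass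
  exact hmass

lemma sSet_eq_hull {R : ℝ} (hR : 0 < R) :
    sSet n R = convexHull ℝ
      ((Finset.image (sVtx n R) Finset.univ : Finset (Vn n)) : Set (Vn n)) := by
  apply Set.Subset.antisymm (sSet_subset_hull hR)
  apply convexHull_min _ (convex_sSet R)
  intro p hp
  simp only [Finset.coe_image, Finset.coe_univ, Set.image_univ, Set.mem_range] at hp
  obtain ⟨o, rfl⟩ := hp
  exact sVtx_mem hR.le o

lemma isBounded_sSet {R : ℝ} (hR : 0 < R) : Bornology.IsBounded (sSet n R) := by
  rw [sSet_eq_hull hR]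
  exact ((Finset.image (sVtx n R) Finset.univ : Finset (Vn n)).finite_toSet.isCompact_convexHull (𝕜 := ℝ)).isBounded

lemma isPolytope_sSet {R : ℝ} (hR : 0 < R) : IsPolytope (sSet n R) := by
  refine ⟨Finset.image (sVtx n R) Finset.univ, ?_, sSet_eq_hull hR⟩
  exact ⟨sVtx n R none, Finset.mem_image_of_mem _ (Finset.mem_univ _)⟩

lemma zero_mem_sSet {R : ℝ} (hR : 0 < R) : (0 : Vn n) ∈ sSet n R := by
  constructor
  · intro i
    have h0 : (0 : Vn n) i = (0 : ℝ) := rfl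
    show -R ≤ (0 : Vn n) i
    rw [h0]
    linarith
  · show ∑ i : Fin n, (0 : Vn n) i ≤ R
    have h0 : ∀ i : Fin n, (0 : Vn n) i = (0 : ℝ) := fun i => rfl
    rw [Finset.sum_congr rfl fun i _ => h0 i, Finset.sum_const, smul_zero]
    linarith

lemma mem_sSet_of_le {x : Vn n} {R : ℝ} (hRx : ∑ i, |x i| ≤ R) : x ∈ sSet n R := by
  constructor
  · intro i
    have h1 : |x i| ≤ ∑ j, |x j| :=
      Finset.single_le_sum (f := fun j => |x j|) (fun j _ => abs_nonneg _) (Finset.mem_univ i)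
    have := abs_le.1 (h1.trans hRx)
    linarith [this.1]
  · calc ∑ i, x i ≤ ∑ i, |x i| := Finset.sum_le_sum (fun i _ => le_abs_self _)
      _ ≤ R := hRx

/-! ### Halfspace description of the simplex, and cells -/

def sCon (n : ℕ) (R : ℝ) : Option (Fin n) → (Vn n →ᵃ[ℝ] ℝ)
  | none => affOf (∑ i, EuclideanSpace.proj i) (-R)
  | some i => affOf (-(EuclideanSpace.proj (𝕜 := ℝ) i)) (-R)

lemma sCon_none_apply (R : ℝ) (x : Vn n) : sCon n R none x = (∑ i, x i) - R := by
  show (∑ i, EuclideanSpace.proj (𝕜 := ℝ) i) x + (-R) = _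
  rw [ContinuousLinearMap.sum_apply]
  have hp : ∀ j : Fin n, (EuclideanSpace.proj (𝕜 := ℝ) j) x = x j := fun _ => rfl
  rw [Finset.sum_congr rfl fun j _ => hp j]
  ring

lemma sCon_some_apply (R : ℝ) (i : Fin n) (x : Vn n) : sCon n R (some i) x = -(x i) - R := by
  show (-(EuclideanSpace.proj (𝕜 := ℝ) i)) x + (-R) = _
  have hp : (EuclideanSpace.proj (𝕜 := ℝ) i) x = x i := rfl
  simp only [ContinuousLinearMap.neg_apply, hp]
  ring

lemma mem_sSet_iff (R : ℝ) (x : Vn n) : x ∈ sSet n R ↔ ∀ o, sCon n R o x ≤ 0 := by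
  constructor
  · rintro ⟨h1, h2⟩ o
    cases o with
    | none => rw [sCon_none_apply]; linarith
    | some i => rw [sCon_some_apply]; linarith [h1 i]
  · intro h
    constructor
    · intro i
      have := h (some i)
      rw [sCon_some_apply] at this
      linarith
    · have := h none
      rw [sCon_none_apply] at this
      linarith

lemma isClosed_sSet (R : ℝ) : IsClosed (sSet n R) := by
  have : sSet n R = ⋂ o, (sCon n R o) ⁻¹' Set.Iic 0 := by
    ext x
    simp [mem_sSet_iff, Set.mem_iInter]
  rw [this]
  exact isClosed_iInter fun o => IsClosed.preimage (continuous_affine _) isClosed_Iic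

def cell (R : ℝ) (W : Finset (Vn n →ᵃ[ℝ] ℝ)) (w : Vn n →ᵃ[ℝ] ℝ) : Set (Vn n) :=
  {x | x ∈ sSet n R ∧ ∀ v ∈ W, v x ≤ w x}

lemma isPolytope_cell {R : ℝ} (hR : 0 < R) (W : Finset (Vn n →ᵃ[ℝ] ℝ))
    (w : Vn n →ᵃ[ℝ] ℝ) (hne : (cell R W w).Nonempty) : IsPolytope (cell R W w) := by
  apply isPolytope_of_halfspaces (ι := Option (Fin n) ⊕ {v // v ∈ W})
    (Sum.elim (sCon n R) (fun v => v.1 - w)) (cell R W w) ?_ ?_ hne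
  · intro x
    constructor
    · rintro ⟨hx1, hx2⟩ i
      cases i with
      | inl o => exact (mem_sSet_iff R x).1 hx1 o
      | inr v =>
        show (v.1 - w) x ≤ 0
        rw [AffineMap.coe_sub, Pi.sub_apply]
        have := hx2 v.1 v.2
        linarith
    · intro h
      constructor
      · rw [mem_sSet_iff]
        intro o
        exact h (Sum.inl o)
      · intro v hv
        have := h (Sum.inr ⟨v, hv⟩)
        rw [show (Sum.elim (sCon n R) (fun v : {v // v ∈ W} => v.1 - w)) (Sum.inr ⟨v, hv⟩) = v - w from rfl,
          AffineMap.coe_sub, Pi.sub_apply] at this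
        linarith
  · exact (isBounded_sSet hR).subset (fun x hx => hx.1)

lemma aff_apply_add (w : Vn n →ᵃ[ℝ] ℝ) (v x : Vn n) : w (v + x) = w.linear v + w x := by
  have := w.map_vadd x v
  simpa using this

lemma affine_eq_of_eqOn_ball {w1 w2 : Vn n →ᵃ[ℝ] ℝ} {x : Vn n} {δ : ℝ} (hδ : 0 < δ)
    (h : ∀ y ∈ Metric.ball x δ, w1 y = w2 y) : w1 = w2 := by
  have hx : w1 x = w2 x := h x (Metric.mem_ball_self hδ)
  have hlin : ∀ v : Vn n, w1.linear v = w2.linear v := by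
    intro v
    rcases eq_or_ne v 0 with rfl | hv
    · simp
    · have hnv : (0:ℝ) < ‖v‖ := norm_pos_iff.2 hv
      set c : ℝ := δ / (2 * ‖v‖) with hc
      have hc0 : 0 < c := by positivity
      have hy : (c • v + x) ∈ Metric.ball x δ := by
        rw [Metric.mem_ball, dist_eq_norm, add_sub_cancel_right, norm_smul,
          Real.norm_eq_abs, abs_of_pos hc0, hc]
        have heq : δ / (2 * ‖v‖) * ‖v‖ = δ / 2 := by
          field_simp
        rw [heq]
        linarith
      have h1 := h _ hy
      rw [aff_apply_add, aff_apply_add, _root_.map_smul, _root_.map_smul, smul_eq_mul, smul_eq_mul, hx] at h1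
      have h2 : c * w1.linear v = c * w2.linear v := by linarith
      exact mul_left_cancel₀ (ne_of_gt hc0) h2
  ext z
  have hz1 : w1 z = w1.linear (z - x) + w1 x := by
    have := aff_apply_add w1 (z - x) x
    rwa [sub_add_cancel] at this
  have hz2 : w2 z = w2.linear (z - x) + w2 x := by
    have := aff_apply_add w2 (z - x) x
    rwa [sub_add_cancel] at this
  rw [hz1, hz2, hx, hlin]

lemma cell_interior_disjoint {R : ℝ} {W : Finset (Vn n →ᵃ[ℝ] ℝ)} {w1 w2 : Vn n →ᵃ[ℝ] ℝ}
    (hw1 : w1 ∈ W) (hw2 : w2 ∈ W) (h12 : w1 ≠ w2) :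
    interior (cell R W w1) ∩ interior (cell R W w2) = ∅ := by
  by_contra h
  obtain ⟨x, hx1, hx2⟩ := Set.nonempty_iff_ne_empty.2 h
  obtain ⟨δ1, hδ1, hball1⟩ := Metric.isOpen_iff.1 isOpen_interior x hx1
  obtain ⟨δ2, hδ2, hball2⟩ := Metric.isOpen_iff.1 isOpen_interior x hx2
  refine h12 (affine_eq_of_eqOn_ball (x := x) (δ := min δ1 δ2) (lt_min hδ1 hδ2) ?_)
  intro y hy
  have hy1 : y ∈ cell R W w1 :=
    interior_subset (hball1 (Metric.ball_subset_ball (min_le_left _ _) hy))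
  have hy2 : y ∈ cell R W w2 :=
    interior_subset (hball2 (Metric.ball_subset_ball (min_le_right _ _) hy))
  exact le_antisymm (hy2.2 w1 hw1) (hy1.2 w2 hw2)

/-! ### The piecewise affine approximants -/

def vmax (W : Finset (Vn n →ᵃ[ℝ] ℝ)) (hWne : W.Nonempty) (x : Vn n) : ℝ :=
  W.sup' hWne fun w' => w' x

open Classical in
def pwFun (R : ℝ) (W : Finset (Vn n →ᵃ[ℝ] ℝ)) (hWne : W.Nonempty) : Vn n → EReal :=
  fun x => if x ∈ sSet n R then ((vmax W hWne x : ℝ) : EReal) else ⊤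

lemma pwFun_pos {R : ℝ} {W : Finset (Vn n →ᵃ[ℝ] ℝ)} {hWne : W.Nonempty} {x : Vn n}
    (hx : x ∈ sSet n R) : pwFun R W hWne x = ((vmax W hWne x : ℝ) : EReal) := by
  rw [pwFun]
  exact if_pos hx

lemma pwFun_neg {R : ℝ} {W : Finset (Vn n →ᵃ[ℝ] ℝ)} {hWne : W.Nonempty} {x : Vn n}
    (hx : x ∉ sSet n R) : pwFun R W hWne x = ⊤ := by
  rw [pwFun]
  exact if_neg hx

lemma le_vmax {W : Finset (Vn n →ᵃ[ℝ] ℝ)} (hWne : W.Nonempty) {w' : Vn n →ᵃ[ℝ] ℝ}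
    (hw' : w' ∈ W) (x : Vn n) : w' x ≤ vmax W hWne x :=
  Finset.le_sup' (fun v => v x) hw'

lemma vmax_eq_of_cell {R : ℝ} {W : Finset (Vn n →ᵃ[ℝ] ℝ)} (hWne : W.Nonempty)
    {w' : Vn n →ᵃ[ℝ] ℝ} (hw' : w' ∈ W) {x : Vn n} (hx : x ∈ cell R W w') :
    vmax W hWne x = w' x :=
  le_antisymm (Finset.sup'_le _ _ fun v hv => hx.2 v hv) (le_vmax hWne hw' x)

lemma affine_comb (w' : Vn n →ᵃ[ℝ] ℝ) (x y : Vn n) (t : ℝ) :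
    w' (t • x + (1 - t) • y) = t * w' x + (1 - t) * w' y := by
  have hd := w'.decomp
  have h1 : w' (t • x + (1 - t) • y) =
      w'.linear (t • x + (1 - t) • y) + w' 0 := congrFun hd _
  have h2 : w' x = w'.linear x + w' 0 := congrFun hd x
  have h3 : w' y = w'.linear y + w' 0 := congrFun hd y
  rw [h1, map_add, _root_.map_smul, _root_.map_smul, smul_eq_mul, smul_eq_mul, h2, h3]
  ring

lemma coe_vmax_le_pwFun {R : ℝ} {W : Finset (Vn n →ᵃ[ℝ] ℝ)} (hWne : W.Nonempty) (x : Vn n) :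
    ((vmax W hWne x : ℝ) : EReal) ≤ pwFun R W hWne x := by
  by_cases hx : x ∈ sSet n R
  · rw [pwFun_pos hx]
  · rw [pwFun_neg hx]
    exact le_top

lemma pwFun_ne_bot {R : ℝ} {W : Finset (Vn n →ᵃ[ℝ] ℝ)} (hWne : W.Nonempty) (x : Vn n) :
    pwFun R W hWne x ≠ ⊥ := by
  by_cases hx : x ∈ sSet n R
  · rw [pwFun_pos hx]; exact EReal.coe_ne_bot _
  · rw [pwFun_neg hx]; exact top_ne_bot

lemma mul_pwFun_ne_bot {R : ℝ} {W : Finset (Vn n →ᵃ[ℝ] ℝ)} (hWne : W.Nonempty) (x : Vn n)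
    {t : ℝ} (ht : 0 < t) : (t : EReal) * pwFun R W hWne x ≠ ⊥ := by
  by_cases hx : x ∈ sSet n R
  · rw [pwFun_pos hx, ← EReal.coe_mul]; exact EReal.coe_ne_bot _
  · rw [pwFun_neg hx, EReal.coe_mul_top_of_pos ht]; exact top_ne_bot

lemma pwFun_mem_ConvSc {R : ℝ} (hR : 0 < R) (W : Finset (Vn n →ᵃ[ℝ] ℝ))
    (hWne : W.Nonempty) : pwFun R W hWne ∈ ConvSc n := by
  refine ⟨⟨?_, ?_, fun x => pwFun_ne_bot hWne x, ⟨0, ?_⟩⟩, ?_⟩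
  · -- convexity
    intro x y t ht0 ht1
    have ht0' : (0:ℝ) ≤ t := ht0.le
    have ht1' : (0:ℝ) ≤ 1 - t := by linarith
    by_cases hx : x ∈ sSet n R
    · by_cases hy : y ∈ sSet n R
      · have hmem : t • x + (1 - t) • y ∈ sSet n R :=
          convex_sSet R hx hy ht0' ht1' (by ring)
        rw [pwFun_pos hmem, pwFun_pos hx, pwFun_pos hy, ← EReal.coe_mul, ← EReal.coe_mul,
          ← EReal.coe_add, EReal.coe_le_coe_iff]
        apply Finset.sup'_le
        intro w' hw'
        rw [affine_comb]
        have h1 : t * w' x ≤ t * vmax W hWne x :=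
          mul_le_mul_of_nonneg_left (le_vmax hWne hw' x) ht0'
        have h2 : (1 - t) * w' y ≤ (1 - t) * vmax W hWne y :=
          mul_le_mul_of_nonneg_left (le_vmax hWne hw' y) ht1'
        linarith
      · have h2 : ((1 - t : ℝ) : EReal) * (⊤ : EReal) = ⊤ :=
          EReal.coe_mul_top_of_pos (by linarith)
        rw [pwFun_neg hy, h2, EReal.add_top_of_ne_bot (mul_pwFun_ne_bot hWne x ht0)]
        exact le_top
    · have h2 : (t : EReal) * (⊤ : EReal) = ⊤ := EReal.coe_mul_top_of_pos ht0
      rw [pwFun_neg hx, h2,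
        EReal.top_add_of_ne_bot (mul_pwFun_ne_bot hWne y (by linarith : (0:ℝ) < 1 - t))]
      exact le_top
  · -- lower semicontinuity
    intro x y hy
    by_cases hx : x ∈ sSet n R
    · rw [pwFun_pos hx] at hy
      rcases eq_or_ne y ⊥ with hyb | hyb
      · filter_upwards with z
        rw [hyb]
        exact bot_lt_iff_ne_bot.2 (pwFun_ne_bot hWne z)
      · have hyt : y ≠ ⊤ := (hy.trans_le le_top).ne
        lift y to ℝ using ⟨hyt, hyb⟩
        obtain ⟨w', hw'W, hfx⟩ := Finset.exists_mem_eq_sup' hWne (fun v => v x)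
        have hyx : (y : ℝ) < w' x := by
          have h := EReal.coe_lt_coe_iff.1 hy
          rw [vmax] at h
          rw [hfx] at h
          exact h
        have hopen : IsOpen {z : Vn n | (y : ℝ) < w' z} :=
          isOpen_lt continuous_const (continuous_affine w')
        filter_upwards [hopen.mem_nhds hyx] with z hz
        calc (y : EReal) < ((w' z : ℝ) : EReal) := EReal.coe_lt_coe_iff.2 hz
          _ ≤ ((vmax W hWne z : ℝ) : EReal) := EReal.coe_le_coe_iff.2 (le_vmax hWne hw'W z)
          _ ≤ pwFun R W hWne z := coe_vmax_le_pwFun hWne z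
    · rw [pwFun_neg hx] at hy
      have hopen : IsOpen (sSet n R)ᶜ := (isClosed_sSet R).isOpen_compl
      filter_upwards [hopen.mem_nhds hx] with z hz
      rw [pwFun_neg hz]
      exact hy
  · -- proper
    rw [pwFun_pos (zero_mem_sSet hR)]
    exact EReal.coe_ne_top _
  · -- supercoercive
    intro M
    obtain ⟨C, hC⟩ := isBounded_iff_forall_norm_le.1 (isBounded_sSet (n := n) hR)
    refine ⟨|C| + 1, ?_⟩
    intro x hx
    have hxn : x ∉ sSet n R := by
      intro hmem
      have h1 := hC x hmem
      have h3 : C ≤ |C| := le_abs_self C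
      linarith
    rw [pwFun_neg hxn]
    exact le_top

lemma pwFun_mem_ConvScPA {R : ℝ} (hR : 0 < R) (W : Finset (Vn n →ᵃ[ℝ] ℝ))
    (hWne : W.Nonempty) : pwFun R W hWne ∈ ConvScPA n := by
  classical
  refine ⟨pwFun_mem_ConvSc hR W hWne, ?_⟩
  set A : Finset (Vn n →ᵃ[ℝ] ℝ) := W.filter (fun w' => (cell R W w').Nonempty) with hA
  have hAsub : A ⊆ W := Finset.filter_subset _ _
  have hcover : ∀ x ∈ sSet n R, ∃ w' ∈ A, x ∈ cell R W w' := by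
    intro x hx
    obtain ⟨b, hbW, hbmax⟩ := Finset.exists_max_image W (fun w' => w' x) hWne
    have hbcell : x ∈ cell R W b := ⟨hx, hbmax⟩
    exact ⟨b, Finset.mem_filter.2 ⟨hbW, ⟨x, hbcell⟩⟩, hbcell⟩
  have hAne : A.Nonempty := by
    obtain ⟨b, hb, _⟩ := hcover 0 (zero_mem_sSet hR)
    exact ⟨b, hb⟩
  set m : ℕ := A.card - 1 with hm
  have hcard : A.card = m + 1 := (Nat.succ_pred_eq_of_pos (Finset.card_pos.2 hAne)).symm
  set e : Fin (m + 1) → {v // v ∈ A} := fun i => A.equivFin.symm (Fin.cast hcard.symm i)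
    with he
  have hesurj : ∀ a : {v // v ∈ A}, ∃ i, e i = a := by
    intro a
    refine ⟨Fin.cast hcard (A.equivFin a), ?_⟩
    rw [he]
    simp
  have heinj : ∀ i j, e i = e j → i = j := by
    intro i j hij
    rw [he] at hij
    have := A.equivFin.symm.injective hij
    exact Fin.cast_injective _ this
  set P : Fin (m + 1) → Set (Vn n) := fun i => cell R W (e i).1 with hP
  set waff : Fin (m + 1) → (Vn n →ᵃ[ℝ] ℝ) := fun i => (e i).1 with hwaff
  have hwaffW : ∀ i, waff i ∈ W := fun i => hAsub (e i).2
  have hwaffcell : ∀ i, (cell R W (waff i)).Nonempty :=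
    fun i => (Finset.mem_filter.1 (e i).2).2
  have hPdef : ∀ i, P i = cell R W (waff i) := fun i => rfl
  have hunion : (⋃ i, P i) = sSet n R := by
    apply Set.Subset.antisymm
    · intro x hx
      obtain ⟨i, hi⟩ := Set.mem_iUnion.1 hx
      exact hi.1
    · intro x hx
      obtain ⟨w', hw'A, hcellmem⟩ := hcover x hx
      obtain ⟨i, hi⟩ := hesurj ⟨w', hw'A⟩
      refine Set.mem_iUnion.2 ⟨i, ?_⟩
      rw [hPdef i, show waff i = w' from congrArg Subtype.val hi]
      exact hcellmem
  refine ⟨m, P, waff, ?_, ?_, ?_, ?_⟩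
  · exact fun i => isPolytope_cell hR W (waff i) (hwaffcell i)
  · rw [hunion]
    exact isPolytope_sSet hR
  · intro i j hij
    apply cell_interior_disjoint (hwaffW i) (hwaffW j)
    intro hww
    apply hij
    apply heinj
    exact Subtype.ext hww
  · funext x
    by_cases hx : x ∈ sSet n R
    · rw [pwFun_pos hx]
      apply le_antisymm
      · apply le_iInf
        intro i
        by_cases hPx : x ∈ P i
        · have hind : indE (P i) x = 0 := if_pos hPx
          have hveq : vmax W hWne x = waff i x := vmax_eq_of_cell hWne (hwaffW i) hPx
          rw [hind, add_zero, hveq]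
        · have hind : indE (P i) x = ⊤ := if_neg hPx
          rw [hind, EReal.coe_add_top]
          exact le_top
      · obtain ⟨w', hw'A, hcellx⟩ := hcover x hx
        obtain ⟨i, hi⟩ := hesurj ⟨w', hw'A⟩
        have hPx : x ∈ P i := by
          rw [hPdef i, show waff i = w' from congrArg Subtype.val hi]
          exact hcellx
        refine iInf_le_of_le i ?_
        have hind : indE (P i) x = 0 := if_pos hPx
        have hveq : vmax W hWne x = waff i x := vmax_eq_of_cell hWne (hwaffW i) hPx
        rw [hind, add_zero, hveq]
    · rw [pwFun_neg hx]
      have hterm : ∀ i, ((waff i x : ℝ) : EReal) + indE (P i) x = ⊤ := by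
        intro i
        have hxP : x ∉ P i := fun h => hx h.1
        rw [show indE (P i) x = ⊤ from if_neg hxP, EReal.coe_add_top]
      rw [iInf_congr hterm]
      exact (iInf_const).symm

end PAApprox

/-- **Approximation in `Conv_sc(ℝⁿ)` by piecewise affine functions**
(Corollary 2.5): every `u ∈ Conv_sc(ℝⁿ)` is the epi-limit of a sequence in
`Conv_sc^{pa}(ℝⁿ)`. -/
theorem approx_piecewise_affine_sc (n : ℕ) (u : Vn n → EReal)
    (hu : u ∈ ConvSc n) :
    ∃ uk : ℕ → Vn n → EReal,
      (∀ k, uk k ∈ ConvScPA n) ∧ EpiConverges uk u := by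
  classical
  obtain ⟨w, hwmin, hwsup⟩ := PAApprox.exists_seq_minorants hu.1
  set W : ℕ → Finset (Vn n →ᵃ[ℝ] ℝ) := fun k => (Finset.range (k+1)).image w with hW
  have hWne : ∀ k, (W k).Nonempty :=
    fun k => ⟨w 0, Finset.mem_image_of_mem _ (Finset.mem_range.2 (Nat.succ_pos k))⟩
  have hRpos : ∀ k : ℕ, (0:ℝ) < (k:ℝ)+1 := fun k => by positivity
  refine ⟨fun k => PAApprox.pwFun ((k:ℝ)+1) (W k) (hWne k),
    fun k => PAApprox.pwFun_mem_ConvScPA (hRpos k) _ _, ?_⟩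
  have hWsub : ∀ {k k' : ℕ}, k ≤ k' → W k ⊆ W k' := by
    intro k k' hk
    apply Finset.image_subset_image
    exact Finset.range_subset_range.2 (by omega)
  have hmemW : ∀ j k, j ≤ k → w j ∈ W k :=
    fun j k hjk => Finset.mem_image_of_mem _ (Finset.mem_range.2 (by omega))
  have hv_mono : ∀ x : Vn n, Monotone fun k => PAApprox.vmax (W k) (hWne k) x := by
    intro x k k' hk
    apply Finset.sup'_le
    intro w' hw'
    exact PAApprox.le_vmax _ (hWsub hk hw') x
  have hv_min : ∀ (k : ℕ) (x : Vn n), ((PAApprox.vmax (W k) (hWne k) x : ℝ) : EReal) ≤ u x := by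
    intro k x
    obtain ⟨w', hw'W, he⟩ := Finset.exists_mem_eq_sup' (hWne k) (fun v => v x)
    rw [PAApprox.vmax, he]
    obtain ⟨j, _, rfl⟩ := Finset.mem_image.1 hw'W
    exact hwmin j x
  have hv_sup : ∀ x : Vn n, (⨆ k, ((PAApprox.vmax (W k) (hWne k) x : ℝ) : EReal)) = u x := by
    intro x
    apply le_antisymm
    · exact iSup_le fun k => hv_min k x
    · rw [← hwsup x]
      apply iSup_le
      intro j
      refine le_trans ?_ (le_iSup (fun k => ((PAApprox.vmax (W k) (hWne k) x : ℝ) : EReal)) j)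
      exact EReal.coe_le_coe_iff.2 (PAApprox.le_vmax _ (hmemW j j le_rfl) x)
  intro x
  constructor
  · intro xk hxk
    rw [← hwsup x]
    apply iSup_le
    intro j
    have h2 : Tendsto (fun k => ((w j (xk k) : ℝ) : EReal)) atTop (𝓝 ((w j x : ℝ) : EReal)) := by
      rw [EReal.tendsto_coe]
      exact ((PAApprox.continuous_affine (w j)).tendsto x).comp hxk
    have h1 : ∀ᶠ k in atTop, ((w j (xk k) : ℝ) : EReal) ≤
        PAApprox.pwFun ((k:ℝ)+1) (W k) (hWne k) (xk k) := by
      rw [eventually_atTop]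
      refine ⟨j, fun k hk => ?_⟩
      calc ((w j (xk k) : ℝ) : EReal)
          ≤ ((PAApprox.vmax (W k) (hWne k) (xk k) : ℝ) : EReal) :=
            EReal.coe_le_coe_iff.2 (PAApprox.le_vmax _ (hmemW j k hk) _)
        _ ≤ _ := PAApprox.coe_vmax_le_pwFun _ _
    calc ((w j x : ℝ) : EReal)
        = liminf (fun k => ((w j (xk k) : ℝ) : EReal)) atTop := h2.liminf_eq.symm
      _ ≤ liminf (fun k : ℕ => PAApprox.pwFun ((k:ℝ)+1) (W k) (hWne k) (xk k)) atTop :=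
          liminf_le_liminf h1
  · refine ⟨fun _ => x, tendsto_const_nhds, ?_⟩
    obtain ⟨K, hK⟩ := exists_nat_ge (∑ i, |x i|)
    have hev : ∀ᶠ k : ℕ in atTop, PAApprox.pwFun ((k:ℝ)+1) (W k) (hWne k) x =
        ((PAApprox.vmax (W k) (hWne k) x : ℝ) : EReal) := by
      rw [eventually_atTop]
      refine ⟨K, fun k hk => ?_⟩
      apply PAApprox.pwFun_pos
      apply PAApprox.mem_sSet_of_le
      calc ∑ i, |x i| ≤ (K:ℝ) := hK
        _ ≤ (k:ℝ) + 1 := by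
            have : (K:ℝ) ≤ (k:ℝ) := by exact_mod_cast hk
            linarith
    have hmono : Monotone fun k => ((PAApprox.vmax (W k) (hWne k) x : ℝ) : EReal) :=
      fun k k' hk => EReal.coe_le_coe_iff.2 (hv_mono x hk)
    have htend : Tendsto (fun k => ((PAApprox.vmax (W k) (hWne k) x : ℝ) : EReal))
        atTop (𝓝 (u x)) := by
      rw [← hv_sup x]
      exact tendsto_atTop_iSup hmono
    exact Tendsto.congr' (hev.mono fun k hk => hk.symm) htend
end
end

section
/- Let u_k, u ∈ Conv_coe(ℝⁿ). Then u_k epi-converges to u if and only if for every t ∈ ℝ with t ≠ min_{x∈ℝⁿ} u(x) the sublevel sets converge: {u_k ≤ t} → {u ≤ t}, meaning that if {u ≤ t} = ∅ then {u_k ≤ t} = ∅ for all sufficiently large k, and if {u ≤ t} ≠ ∅ then {u_k ≤ t} ≠ ∅ for all sufficiently large k and the Hausdorff distance between {u_k ≤ t} and {u ≤ t} tends to 0. -/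
open Filter Topology MeasureTheory

noncomputable section

/-- `Conv_coe(ℝⁿ)`: coercive elements of `Conv(ℝⁿ)`, i.e.
`u(x) → +∞` as `|x| → +∞`. -/
def ConvCoe (n : ℕ) : Set (Vn n → EReal) :=
  {u | u ∈ ConvSet n ∧
    ∀ M : ℝ, ∃ R : ℝ, ∀ x : Vn n, R ≤ ‖x‖ → (M : EReal) ≤ u x}

open Metric Set Bornology

variable {n : ℕ}

lemma sub_closed {u : Vn n → EReal} (hu : u ∈ ConvCoe n) (t : EReal) :
    IsClosed {x : Vn n | u x ≤ t} :=
  hu.1.2.1.isClosed_preimage t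

lemma sub_bounded {u : Vn n → EReal} (hu : u ∈ ConvCoe n) (t : ℝ) :
    ∃ R : ℝ, 0 < R ∧ {x : Vn n | u x ≤ (t : EReal)} ⊆ closedBall 0 R := by
  obtain ⟨R, hR⟩ := hu.2 (t + 1)
  refine ⟨max R 1, by positivity, fun x hx => ?_⟩
  simp only [mem_closedBall, dist_zero_right]
  by_contra h
  push_neg at h
  have h1 : R ≤ ‖x‖ := le_trans (le_max_left _ _) h.le
  have := hR x h1
  have h2 : ((t + 1 : ℝ) : EReal) ≤ (t : EReal) := le_trans this hx
  rw [EReal.coe_le_coe_iff] at h2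
  linarith

lemma sub_isBounded {u : Vn n → EReal} (hu : u ∈ ConvCoe n) (t : ℝ) :
    IsBounded {x : Vn n | u x ≤ (t : EReal)} := by
  obtain ⟨R, _, hR⟩ := sub_bounded hu t
  exact (isBounded_closedBall (x := (0 : Vn n)) (r := R)).subset hR

lemma sub_compact {u : Vn n → EReal} (hu : u ∈ ConvCoe n) (t : ℝ) :
    IsCompact {x : Vn n | u x ≤ (t : EReal)} :=
  Metric.isCompact_of_isClosed_isBounded (sub_closed hu _) (sub_isBounded hu t)

/-- The infimum of a coercive convex function is real and attained. -/
lemma exists_min {u : Vn n → EReal} (hu : u ∈ ConvCoe n) :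
    ∃ (z : Vn n) (m : ℝ), u z = (m : EReal) ∧ (⨅ x : Vn n, u x) = (m : EReal) := by
  set M : EReal := ⨅ x : Vn n, u x with hM
  have hMtop : M ≠ ⊤ := by
    obtain ⟨x0, hx0⟩ := hu.1.2.2.2
    intro h
    exact hx0 (top_le_iff.1 (h ▸ iInf_le u x0))
  have hMlt : ∀ j : ℕ, ∃ t : ℝ, M < (t : EReal) ∧
      ((M = ⊥ ∧ t = -(j:ℝ)) ∨ (M ≠ ⊥ ∧ t = M.toReal + 1/(j+1))) := by
    intro j
    by_cases hb : M = ⊥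
    · exact ⟨-(j:ℝ), by rw [hb]; exact EReal.bot_lt_coe _, Or.inl ⟨hb, rfl⟩⟩
    · refine ⟨M.toReal + 1/(j+1), ?_, Or.inr ⟨hb, rfl⟩⟩
      have hMr : M = (M.toReal : EReal) := (EReal.coe_toReal hMtop hb).symm
      rw [hMr]
      rw [EReal.coe_lt_coe_iff, EReal.toReal_coe]
      have : (0:ℝ) < 1/(j+1) := by positivity
      linarith
  choose t ht1 ht2 using hMlt
  have htanti : ∀ j, t (j+1) ≤ t j := by
    intro j
    rcases ht2 j with ⟨hb, hj⟩ | ⟨hb, hj⟩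
    · rcases ht2 (j+1) with ⟨_, hj'⟩ | ⟨hb', _⟩
      · rw [hj, hj']; push_cast; linarith
      · exact absurd hb hb'.elim
    · rcases ht2 (j+1) with ⟨hb', _⟩ | ⟨_, hj'⟩
      · exact absurd hb' hb
      · rw [hj, hj']
        have : (1:ℝ)/(j+1+1) ≤ 1/(j+1) := by
          apply one_div_le_one_div_of_le <;> push_cast <;> linarith
        push_cast at this ⊢
        linarith
  set C : ℕ → Set (Vn n) := fun j => {x : Vn n | u x ≤ (t j : EReal)} with hC
  have hne : ∀ j, (C j).Nonempty := by
    intro j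
    obtain ⟨x, hx⟩ := iInf_lt_iff.1 (ht1 j)
    exact ⟨x, hx.le⟩
  have hinter : (⋂ j, C j).Nonempty := by
    apply IsCompact.nonempty_iInter_of_sequence_nonempty_isCompact_isClosed C
      (fun j x hx => le_trans hx (EReal.coe_le_coe_iff.2 (htanti j))) hne
      (sub_compact hu (t 0)) (fun j => sub_closed hu _)
  obtain ⟨z, hz⟩ := hinter
  simp only [mem_iInter, hC, mem_setOf_eq] at hz
  have hMb : M ≠ ⊥ := by
    intro hb
    apply hu.1.2.2.1 z
    by_contra hzb
    have hlt : (⊥ : EReal) < u z := lt_of_le_of_ne bot_le (Ne.symm hzb)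
    obtain ⟨r, _, hr2⟩ := EReal.exists_between_coe_real hlt
    obtain ⟨j, hj⟩ := exists_nat_gt (-r)
    have h1 : u z ≤ ((-(j:ℝ)) : EReal) := by
      rcases ht2 j with ⟨_, hj'⟩ | ⟨hb', _⟩
      · have := hz j; rw [hj'] at this; exact this
      · exact absurd hb hb'
    have h2 : ((-(j:ℝ)) : EReal) < (r : EReal) := by
      exact_mod_cast show -(j:ℝ) < r by linarith
    exact absurd (lt_of_le_of_lt (h1.trans h2.le) hr2) (lt_irrefl _)
  set m : ℝ := M.toReal with hm
  have hMr : M = (m : EReal) := (EReal.coe_toReal hMtop hMb).symm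
  have huz : u z ≤ (m : EReal) := by
    by_contra h
    push_neg at h
    obtain ⟨r, hr1, hr2⟩ := EReal.exists_between_coe_real h
    rw [EReal.coe_lt_coe_iff] at hr1
    obtain ⟨j, hj⟩ := exists_nat_one_div_lt (show (0:ℝ) < r - m by linarith)
    have h1 : u z ≤ ((m + 1/(j+1)) : EReal) := by
      rcases ht2 j with ⟨hb', _⟩ | ⟨_, hj'⟩
      · exact absurd hb' hMb
      · have := hz j; rw [hj'] at this; exact_mod_cast this
    have h2 : ((m + 1/(j+1) : ℝ) : EReal) < u z := by
      refine lt_of_lt_of_le ?_ hr2.le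
      rw [EReal.coe_lt_coe_iff]
      push_cast at hj ⊢
      linarith
    exact absurd (h1.trans_lt h2) (lt_irrefl _)
  have hge : (m : EReal) ≤ u z := hMr ▸ iInf_le u z
  exact ⟨z, m, le_antisymm huz hge, hMr⟩

/-- values of a proper function below a real bound are real -/
lemma exists_real_of_le {e : EReal} (hb : e ≠ ⊥) {c : ℝ} (h : e ≤ (c : EReal)) :
    ∃ a : ℝ, e = (a : EReal) ∧ a ≤ c := by
  have ht : e ≠ ⊤ := fun h' => by simp [h'] at h
  refine ⟨e.toReal, (EReal.coe_toReal ht hb).symm, ?_⟩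
  rw [show e = (e.toReal : EReal) from (EReal.coe_toReal ht hb).symm] at h
  exact_mod_cast h

/-- convexity: segment bound for sublevel sets -/
lemma convexFn_segment {u : Vn n → EReal} (hc : IsConvexFn u) (hbot : ∀ x, u x ≠ ⊥)
    {x y : Vn n} {c : ℝ} (hx : u x ≤ (c : EReal)) (hy : u y ≤ (c : EReal))
    {s : ℝ} (h0 : 0 < s) (h1 : s < 1) :
    u (s • x + (1 - s) • y) ≤ (c : EReal) := by
  obtain ⟨a, ha, hac⟩ := exists_real_of_le (hbot x) hx
  obtain ⟨b, hb, hbc⟩ := exists_real_of_le (hbot y) hy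
  calc u (s • x + (1 - s) • y) ≤ (s : EReal) * u x + ((1 - s : ℝ) : EReal) * u y :=
        hc x y s h0 h1
    _ = ((s * a + (1 - s) * b : ℝ) : EReal) := by
        rw [ha, hb]
        push_cast
        ring
    _ ≤ (c : EReal) := by
        rw [EReal.coe_le_coe_iff]
        nlinarith

/-- limit point extraction from frequently-witnessed bounded sublevel points -/
lemma limpt {uk : ℕ → Vn n → EReal} {u : Vn n → EReal}
    (hlim : ∀ x : Vn n, ∀ xk : ℕ → Vn n, Tendsto xk atTop (𝓝 x) →
      u x ≤ liminf (fun k => uk k (xk k)) atTop)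
    {F : Set (Vn n)} (hF : IsClosed F) {C t : ℝ}
    (hfreq : ∃ᶠ k in atTop, ∃ x, x ∈ F ∧ ‖x‖ ≤ C ∧ uk k x ≤ (t : EReal)) :
    ∃ z, z ∈ F ∧ u z ≤ (t : EReal) := by
  obtain ⟨φ, hφ, hφP⟩ := extraction_of_frequently_atTop hfreq
  choose p hpF hpC hpu using hφP
  have hpball : ∀ j, p j ∈ closedBall (0 : Vn n) C := by
    intro j; simpa [mem_closedBall, dist_zero_right] using hpC j
  obtain ⟨z, _, ψ, hψ, hconv⟩ :=
    tendsto_subseq_of_bounded (isBounded_closedBall (x := (0:Vn n)) (r := C)) hpball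
  have hzF : z ∈ F := hF.mem_of_tendsto hconv (Eventually.of_forall (fun j => hpF (ψ j)))
  set σ : ℕ → ℕ := φ ∘ ψ with hσdef
  have hσ : StrictMono σ := hφ.comp hψ
  classical
  set xk : ℕ → Vn n := fun k => if h : ∃ j, σ j = k then p (ψ (Classical.choose h)) else z
    with hxkdef
  have hxkσ : ∀ j, xk (σ j) = p (ψ j) := by
    intro j
    have h : ∃ j', σ j' = σ j := ⟨j, rfl⟩
    have hch : Classical.choose h = j := hσ.injective (Classical.choose_spec h)
    simp only [hxkdef, dif_pos h, hch]
  have htend : Tendsto xk atTop (𝓝 z) := by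
    rw [Metric.tendsto_atTop]
    intro ε hε
    obtain ⟨J, hJ⟩ := Metric.tendsto_atTop.1 hconv ε hε
    refine ⟨σ J, fun k hk => ?_⟩
    by_cases h : ∃ j, σ j = k
    · have hspec := Classical.choose_spec h
      have hch : J ≤ Classical.choose h := by
        by_contra hcon
        push_neg at hcon
        have := hσ hcon
        omega
      have := hJ (Classical.choose h) hch
      simpa [hxkdef, dif_pos h] using this
    · simp [hxkdef, dif_neg h, hε]
  have h1 : u z ≤ liminf (fun k => uk k (xk k)) atTop := hlim z xk htend
  have h2 : liminf (fun k => uk k (xk k)) atTop ≤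
      liminf (fun j => uk (σ j) (xk (σ j))) atTop := by
    have hmap : map σ atTop ≤ atTop := hσ.tendsto_atTop
    have := liminf_le_liminf_of_le (u := fun k => uk k (xk k)) hmap
    rwa [← liminf_comp] at this
  have h3 : liminf (fun j => uk (σ j) (xk (σ j))) atTop ≤ (t : EReal) := by
    apply liminf_le_of_frequently_le'
    apply Frequently.of_forall
    intro j
    rw [hxkσ j]
    exact hpu (ψ j)
  exact ⟨z, hzF, h1.trans (h2.trans h3)⟩

/-- equi-coercivity of an epi-convergent sequence -/
lemma equicoercive {uk : ℕ → Vn n → EReal} {u : Vn n → EReal}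
    (hk : ∀ k, uk k ∈ ConvCoe n) (hu : u ∈ ConvCoe n)
    (hepi : EpiConverges uk u) (t' : ℝ) :
    ∃ R : ℝ, ∀ᶠ k in atTop, ∀ x, uk k x ≤ (t' : EReal) → ‖x‖ ≤ R := by
  obtain ⟨z₀, m, hz₀, _⟩ := exists_min hu
  obtain ⟨y, hyt, hyv⟩ := (hepi z₀).2
  set t'' : ℝ := max t' (m + 1) with ht''
  -- coercivity radius of u for t'' + 1
  obtain ⟨Rc, hRc⟩ := hu.2 (t'' + 1)
  set R₀ : ℝ := max (Rc + ‖z₀‖ + 1) 2 with hR₀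
  refine ⟨R₀ + 1 + ‖z₀‖, ?_⟩
  by_contra hcon
  rw [Filter.not_eventually] at hcon
  have hev1 : ∀ᶠ k in atTop, uk k (y k) ≤ ((m + 1 : ℝ) : EReal) := by
    have : (u z₀) < ((m+1:ℝ) : EReal) := by
      rw [hz₀, EReal.coe_lt_coe_iff]; linarith
    exact (hyv.eventually_lt_const this).mono (fun k h => h.le)
  have hev2 : ∀ᶠ k in atTop, ‖y k - z₀‖ ≤ 1 := by
    have := Metric.tendsto_atTop.1 hyt 1 one_pos
    obtain ⟨N, hN⟩ := this
    exact eventually_atTop.2 ⟨N, fun k hk => by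
      have := hN k hk; rw [dist_eq_norm] at this; linarith⟩
  have hfreq : ∃ᶠ k in atTop, ∃ w, w ∈ {w : Vn n | R₀ - 1 ≤ ‖w - z₀‖} ∧
      ‖w‖ ≤ R₀ + 1 + ‖z₀‖ ∧ uk k w ≤ (t'' : EReal) := by
    refine (hcon.and_eventually (hev1.and hev2)).mono ?_
    rintro k ⟨hk1, hk2, hk3⟩
    push_neg at hk1
    obtain ⟨x, hxle, hxnorm⟩ := hk1
    have hR₀2 : (2:ℝ) ≤ R₀ := le_max_right _ _
    have hxz : R₀ + 1 < ‖x - z₀‖ := by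
      have := norm_sub_norm_le x z₀
      linarith [norm_sub_rev x z₀ ▸ (norm_sub_norm_le x z₀)]
    have hd : R₀ < ‖x - y k‖ := by
      have h1 : ‖x - z₀‖ ≤ ‖x - y k‖ + ‖y k - z₀‖ := norm_sub_le_norm_sub_add_norm_sub x (y k) z₀
      linarith
    have hdpos : (0:ℝ) < ‖x - y k‖ := by linarith
    set s : ℝ := R₀ / ‖x - y k‖ with hs
    have hs0 : 0 < s := by positivity
    have hs1 : s < 1 := (div_lt_one hdpos).2 hd
    refine ⟨s • x + (1 - s) • y k, ?_, ?_, ?_⟩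
    · -- R₀ - 1 ≤ ‖w - z₀‖
      have hw : s • x + (1 - s) • y k - z₀ = s • (x - y k) + (y k - z₀) := by
        module
      have hnorm : ‖s • (x - y k)‖ = R₀ := by
        rw [norm_smul, Real.norm_eq_abs, abs_of_pos hs0, hs]
        field_simp
      simp only [mem_setOf_eq, hw]
      have h2 : ‖s • (x - y k)‖ ≤ ‖s • (x - y k) + (y k - z₀)‖ + ‖y k - z₀‖ := by
        have := norm_sub_le (s • (x - y k) + (y k - z₀)) (y k - z₀)
        simpa using this
      linarith
    · -- ‖w‖ ≤ R₀ + 1 + ‖z₀‖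
      have hw : s • x + (1 - s) • y k = s • (x - y k) + (y k - z₀) + z₀ := by
        module
      rw [hw]
      have hnorm : ‖s • (x - y k)‖ = R₀ := by
        rw [norm_smul, Real.norm_eq_abs, abs_of_pos hs0, hs]
        field_simp
      calc ‖s • (x - y k) + (y k - z₀) + z₀‖
          ≤ ‖s • (x - y k)‖ + ‖y k - z₀‖ + ‖z₀‖ := norm_add₃_le
        _ ≤ R₀ + 1 + ‖z₀‖ := by rw [hnorm]; linarith
    · -- uk k w ≤ t''
      apply convexFn_segment (hk k).1.1 (hk k).1.2.2.1
        (hxle.trans (by exact_mod_cast le_max_left _ _))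
        (hk2.trans (by exact_mod_cast le_max_right _ _)) hs0 hs1
  have hFclosed : IsClosed {w : Vn n | R₀ - 1 ≤ ‖w - z₀‖} := by
    have : Continuous fun w : Vn n => ‖w - z₀‖ := (continuous_id.sub continuous_const).norm
    exact isClosed_le continuous_const this
  obtain ⟨z, hzF, hzu⟩ := limpt (fun x => (hepi x).1) hFclosed hfreq
  -- z is far from origin, so u z ≥ t'' + 1, contradiction
  have hz1 : Rc ≤ ‖z‖ := by
    have h1 : R₀ - 1 ≤ ‖z - z₀‖ := hzF
    have h2 : ‖z - z₀‖ ≤ ‖z‖ + ‖z₀‖ := norm_sub_le z z₀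
    have : Rc + ‖z₀‖ + 1 ≤ R₀ := le_max_left _ _
    linarith
  have := hRc z hz1
  have : ((t'' + 1 : ℝ) : EReal) ≤ (t'' : EReal) := this.trans hzu
  rw [EReal.coe_le_coe_iff] at this
  linarith

lemma recovery_near {uk : ℕ → Vn n → EReal} {u : Vn n → EReal}
    (hepi : EpiConverges uk u) {y : Vn n} {t : ℝ} (hyt : u y < (t : EReal))
    {δ : ℝ} (hδ : 0 < δ) :
    ∀ᶠ k in atTop, ∃ w, uk k w ≤ (t : EReal) ∧ dist w y < δ := by
  obtain ⟨wk, hwt, hwv⟩ := (hepi y).2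
  have h1 : ∀ᶠ k in atTop, uk k (wk k) < (t : EReal) := hwv.eventually_lt_const hyt
  have h2 : ∀ᶠ k in atTop, wk k ∈ ball y δ := hwt (Metric.ball_mem_nhds y hδ)
  exact (h1.and h2).mono (fun k ⟨ha, hb⟩ => ⟨wk k, ha.le, by simpa [mem_ball] using hb⟩)

lemma forward_dir {uk : ℕ → Vn n → EReal} {u : Vn n → EReal}
    (hk : ∀ k, uk k ∈ ConvCoe n) (hu : u ∈ ConvCoe n)
    (hepi : EpiConverges uk u) :
    ∀ t : ℝ, (t : EReal) ≠ (⨅ x : Vn n, u x) →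
      ({x : Vn n | u x ≤ (t : EReal)} = ∅ →
          ∀ᶠ k in atTop, {x : Vn n | uk k x ≤ (t : EReal)} = ∅) ∧
      ({x : Vn n | u x ≤ (t : EReal)}.Nonempty →
          (∀ᶠ k in atTop, {x : Vn n | uk k x ≤ (t : EReal)}.Nonempty) ∧
          Tendsto (fun k => Metric.hausdorffDist
              {x : Vn n | uk k x ≤ (t : EReal)} {x : Vn n | u x ≤ (t : EReal)})
            atTop (𝓝 0)) := by
  obtain ⟨z₀, m, hz₀, hinf⟩ := exists_min hu
  have hmle : ∀ x, (m : EReal) ≤ u x := fun x => hinf ▸ iInf_le u x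
  intro t ht
  rw [hinf] at ht
  have htm : t ≠ m := fun h => ht (by exact_mod_cast h)
  constructor
  · -- empty case
    intro hempty
    have htlt : t < m := by
      rcases lt_or_gt_of_ne htm with h | h
      · exact h
      · exfalso
        have : z₀ ∈ {x : Vn n | u x ≤ (t : EReal)} := by
          simp only [mem_setOf_eq, hz₀]
          exact_mod_cast h.le
        simp [hempty] at this
    by_contra hcon
    rw [Filter.not_eventually] at hcon
    obtain ⟨R, hR⟩ := equicoercive hk hu hepi t
    have hfreq : ∃ᶠ k in atTop, ∃ x, x ∈ (univ : Set (Vn n)) ∧ ‖x‖ ≤ R ∧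
        uk k x ≤ (t : EReal) := by
      refine (hcon.and_eventually hR).mono ?_
      rintro k ⟨hk1, hk2⟩
      obtain ⟨x, hx⟩ := Set.nonempty_iff_ne_empty.2 hk1
      exact ⟨x, mem_univ x, hk2 x hx, hx⟩
    obtain ⟨z, _, hzu⟩ := limpt (fun x => (hepi x).1) isClosed_univ hfreq
    have h1 : (m : EReal) ≤ (t : EReal) := (hmle z).trans hzu
    rw [EReal.coe_le_coe_iff] at h1
    linarith
  · -- nonempty case
    intro hne
    set A : Set (Vn n) := {x : Vn n | u x ≤ (t : EReal)} with hA
    have hmlt : m < t := by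
      obtain ⟨a, ha⟩ := hne
      have := (hmle a).trans ha
      rw [EReal.coe_le_coe_iff] at this
      exact lt_of_le_of_ne this (Ne.symm htm)
    have hAcompact : IsCompact A := sub_compact hu t
    have hAclosed : IsClosed A := sub_closed hu _
    have hAbdd : IsBounded A := sub_isBounded hu t
    -- (i): points of A_k are close to A
    have hi : ∀ ε : ℝ, 0 < ε → ∀ᶠ k in atTop, ∀ x, uk k x ≤ (t : EReal) →
        infDist x A ≤ ε := by
      intro ε hε
      by_contra hcon
      rw [Filter.not_eventually] at hcon
      obtain ⟨R, hR⟩ := equicoercive hk hu hepi t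
      have hFclosed : IsClosed {x : Vn n | ε ≤ infDist x A} :=
        isClosed_le continuous_const (continuous_infDist_pt A)
      have hfreq : ∃ᶠ k in atTop, ∃ x, x ∈ {x : Vn n | ε ≤ infDist x A} ∧ ‖x‖ ≤ R ∧
          uk k x ≤ (t : EReal) := by
        refine (hcon.and_eventually hR).mono ?_
        rintro k ⟨hk1, hk2⟩
        push_neg at hk1
        obtain ⟨x, hx1, hx2⟩ := hk1
        exact ⟨x, hx2.le, hk2 x hx1, hx1⟩
      obtain ⟨z, hzF, hzu⟩ := limpt (fun x => (hepi x).1) hFclosed hfreq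
      have hzA : z ∈ A := hzu
      have h0 : infDist z A = 0 := Metric.infDist_zero_of_mem hzA
      have hεle : ε ≤ infDist z A := hzF
      linarith [h0 ▸ hεle]
    -- near points with strictly smaller value
    have hnear : ∀ ε : ℝ, 0 < ε → ∀ x ∈ A, ∃ y, u y < (t : EReal) ∧ dist y x < ε := by
      intro ε hε x hx
      by_cases hxt : u x < (t : EReal)
      · exact ⟨x, hxt, by simpa using hε⟩
      · have hxe : u x = (t : EReal) := le_antisymm hx (not_lt.1 hxt)
        set s : ℝ := min (1/2) (ε / (2 * (‖z₀ - x‖ + 1))) with hs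
        have hz0x : (0:ℝ) < ‖z₀ - x‖ + 1 := by positivity
        have hs0 : 0 < s := by
          apply lt_min (by norm_num)
          positivity
        have hs1 : s < 1 := lt_of_le_of_lt (min_le_left _ _) (by norm_num)
        refine ⟨s • z₀ + (1 - s) • x, ?_, ?_⟩
        · calc u (s • z₀ + (1 - s) • x)
              ≤ (s : EReal) * u z₀ + ((1 - s : ℝ) : EReal) * u x := hu.1.1 z₀ x s hs0 hs1
            _ = ((s * m + (1 - s) * t : ℝ) : EReal) := by rw [hz₀, hxe]; push_cast; ring
            _ < (t : EReal) := by
                rw [EReal.coe_lt_coe_iff]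
                nlinarith
        · have : s • z₀ + (1 - s) • x - x = s • (z₀ - x) := by module
          rw [dist_eq_norm, this, norm_smul, Real.norm_eq_abs, abs_of_pos hs0]
          have h1 : s ≤ ε / (2 * (‖z₀ - x‖ + 1)) := min_le_right _ _
          have h2 : s * ‖z₀ - x‖ ≤ ε / (2 * (‖z₀ - x‖ + 1)) * ‖z₀ - x‖ :=
            mul_le_mul_of_nonneg_right h1 (norm_nonneg _)
          have h3 : ε / (2 * (‖z₀ - x‖ + 1)) * ‖z₀ - x‖ < ε := by
            rw [div_mul_eq_mul_div, div_lt_iff₀ (by positivity)]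
            nlinarith [norm_nonneg (z₀ - x)]
          linarith
    -- (ii): points of A are close to A_k
    have hii : ∀ ε : ℝ, 0 < ε → ∀ᶠ k in atTop, ∀ x ∈ A,
        infDist x {x : Vn n | uk k x ≤ (t : EReal)} ≤ ε := by
      intro ε hε
      have hε2 : 0 < ε / 2 := by linarith
      choose! y hy1 hy2 using hnear (ε/2) hε2
      have hcover : A ⊆ ⋃ a : A, ball (y a) (ε/2) := by
        intro x hx
        exact mem_iUnion.2 ⟨⟨x, hx⟩, by
          simp only [mem_ball]
          rw [dist_comm]
          exact hy2 x hx⟩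
      obtain ⟨S, hS⟩ := hAcompact.elim_finite_subcover
        (fun a : A => ball (y a) (ε/2)) (fun a => isOpen_ball) hcover
      have hev : ∀ᶠ k in atTop, ∀ a ∈ S, ∃ w, uk k w ≤ (t : EReal) ∧
          dist w (y a) < ε/2 := by
        rw [eventually_all_finset]
        intro a _
        exact recovery_near hepi (hy1 a a.2) hε2
      refine hev.mono ?_
      intro k hkk x hx
      obtain ⟨a, haS, hxa⟩ := by
        have := hS hx
        rw [mem_iUnion₂] at this
        exact this
      obtain ⟨w, hw1, hw2⟩ := hkk a haS
      rw [mem_ball] at hxa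
      have : infDist x {x : Vn n | uk k x ≤ (t : EReal)} ≤ dist x w :=
        infDist_le_dist_of_mem hw1
      have hdx : dist x w ≤ dist x (y a) + dist (y a) w := dist_triangle _ _ _
      rw [dist_comm (y a) w] at hdx
      linarith
    -- eventual nonemptiness
    have hnonempty : ∀ᶠ k in atTop, {x : Vn n | uk k x ≤ (t : EReal)}.Nonempty := by
      have hz₀lt : u z₀ < (t : EReal) := by rw [hz₀]; exact_mod_cast hmlt
      exact (recovery_near hepi hz₀lt one_pos).mono
        (fun k ⟨w, hw, _⟩ => ⟨w, hw⟩)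
    refine ⟨hnonempty, ?_⟩
    rw [Metric.tendsto_atTop]
    intro ε hε
    have hε2 : 0 < ε / 2 := by linarith
    have hcomb : ∀ᶠ k in atTop, Metric.hausdorffDist
        {x : Vn n | uk k x ≤ (t : EReal)} A ≤ ε / 2 := by
      filter_upwards [hi (ε/2) hε2, hii (ε/2) hε2] with k h1 h2
      exact Metric.hausdorffDist_le_of_infDist hε2.le (fun x hx => h1 x hx) h2
    obtain ⟨N, hN⟩ := eventually_atTop.1 hcomb
    refine ⟨N, fun k hkN => ?_⟩
    have h1 := hN k hkN
    have h2 : 0 ≤ Metric.hausdorffDist {x : Vn n | uk k x ≤ (t : EReal)} A :=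
      Metric.hausdorffDist_nonneg
    rw [Real.dist_eq]
    rw [abs_of_nonneg (by simpa using h2)]
    simp only [sub_zero]
    linarith

lemma backward_liminf {uk : ℕ → Vn n → EReal} {u : Vn n → EReal}
    (hk : ∀ k, uk k ∈ ConvCoe n) (hu : u ∈ ConvCoe n)
    (H : ∀ t : ℝ, (t : EReal) ≠ (⨅ x : Vn n, u x) →
      ({x : Vn n | u x ≤ (t : EReal)} = ∅ →
          ∀ᶠ k in atTop, {x : Vn n | uk k x ≤ (t : EReal)} = ∅) ∧
      ({x : Vn n | u x ≤ (t : EReal)}.Nonempty →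
          (∀ᶠ k in atTop, {x : Vn n | uk k x ≤ (t : EReal)}.Nonempty) ∧
          Tendsto (fun k => Metric.hausdorffDist
              {x : Vn n | uk k x ≤ (t : EReal)} {x : Vn n | u x ≤ (t : EReal)})
            atTop (𝓝 0))) :
    ∀ x : Vn n, ∀ xk : ℕ → Vn n, Tendsto xk atTop (𝓝 x) →
      u x ≤ liminf (fun k => uk k (xk k)) atTop := by
  obtain ⟨z₀, m, hz₀, hinf⟩ := exists_min hu
  intro x xk hxk
  by_contra hcon
  push_neg at hcon
  set L := liminf (fun k => uk k (xk k)) atTop with hL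
  -- find a real t with L < t < u x and t ≠ m
  obtain ⟨t, ht1, ht2, ht3⟩ : ∃ t : ℝ, L < (t : EReal) ∧ (t : EReal) < u x ∧ t ≠ m := by
    obtain ⟨a, ha1, ha2⟩ := EReal.exists_between_coe_real hcon
    by_cases ham : a = m
    · obtain ⟨b, hb1, hb2⟩ := EReal.exists_between_coe_real ha1
      refine ⟨b, hb1, hb2.trans ha2, ?_⟩
      rw [EReal.coe_lt_coe_iff] at hb2
      intro h; rw [h, ← ham] at hb2; exact lt_irrefl _ hb2
    · exact ⟨a, ha1, ha2, ham⟩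
  have htne : (t : EReal) ≠ ⨅ x : Vn n, u x := by
    rw [hinf]; exact_mod_cast ht3
  rcases Set.eq_empty_or_nonempty {x : Vn n | u x ≤ (t : EReal)} with hemp | hne
  · -- empty: eventually all uk k values exceed t
    have hev := (H t htne).1 hemp
    have hge : ∀ᶠ k in atTop, (t : EReal) ≤ uk k (xk k) := by
      refine hev.mono (fun k hk' => ?_)
      by_contra h
      push_neg at h
      have : xk k ∈ {y : Vn n | uk k y ≤ (t : EReal)} := h.le
      simp [hk'] at this
    have : (t : EReal) ≤ L := le_liminf_of_le (by isBoundedDefault) hge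
    exact absurd (this.trans_lt ht1) (lt_irrefl _)
  · set A := {x : Vn n | u x ≤ (t : EReal)} with hA
    obtain ⟨hne_ev, htend⟩ := (H t htne).2 hne
    have hxA : x ∉ A := fun h => absurd (lt_of_le_of_lt h ht2) (lt_irrefl _)
    have hd : 0 < infDist x A :=
      ((sub_closed hu (t : EReal)).notMem_iff_infDist_pos hne).1 hxA
    set d := infDist x A with hdd
    have hfreq : ∃ᶠ k in atTop, uk k (xk k) < (t : EReal) :=
      frequently_lt_of_liminf_lt (by isBoundedDefault) ht1
    have hev2 : ∀ᶠ k in atTop,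
        Metric.hausdorffDist {y : Vn n | uk k y ≤ (t : EReal)} A < d/3 ∧
        {y : Vn n | uk k y ≤ (t : EReal)}.Nonempty ∧ dist (xk k) x < d/3 := by
      have h1 : ∀ᶠ k in atTop, Metric.hausdorffDist
          {y : Vn n | uk k y ≤ (t : EReal)} A < d/3 := by
        have := Metric.tendsto_atTop.1 htend (d/3) (by linarith)
        obtain ⟨N, hN⟩ := this
        refine eventually_atTop.2 ⟨N, fun k hkN => ?_⟩
        have := hN k hkN
        rw [Real.dist_eq, sub_zero] at this
        exact lt_of_le_of_lt (le_abs_self _) this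
      have h3 : ∀ᶠ k in atTop, dist (xk k) x < d/3 := by
        obtain ⟨N, hN⟩ := Metric.tendsto_atTop.1 hxk (d/3) (by linarith)
        exact eventually_atTop.2 ⟨N, hN⟩
      filter_upwards [h1, hne_ev, h3] with k a b c using ⟨a, b, c⟩
    obtain ⟨k, hk1, hk2, hk3, hk4⟩ := (hfreq.and_eventually hev2).exists
    have hmem : xk k ∈ {y : Vn n | uk k y ≤ (t : EReal)} := hk1.le
    have hedist : EMetric.hausdorffEdist {y : Vn n | uk k y ≤ (t : EReal)} A ≠ ⊤ :=
      Metric.hausdorffEdist_ne_top_of_nonempty_of_bounded hk3 hne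
        (sub_isBounded (hk k) t) (sub_isBounded hu t)
    have h5 : infDist (xk k) A ≤ Metric.hausdorffDist
        {y : Vn n | uk k y ≤ (t : EReal)} A :=
      Metric.infDist_le_hausdorffDist_of_mem hmem hedist
    have h6 : infDist x A ≤ infDist (xk k) A + dist x (xk k) :=
      Metric.infDist_le_infDist_add_dist
    rw [dist_comm] at h6
    linarith

lemma backward_recovery {uk : ℕ → Vn n → EReal} {u : Vn n → EReal}
    (hk : ∀ k, uk k ∈ ConvCoe n) (hu : u ∈ ConvCoe n)
    (H : ∀ t : ℝ, (t : EReal) ≠ (⨅ x : Vn n, u x) →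
      ({x : Vn n | u x ≤ (t : EReal)} = ∅ →
          ∀ᶠ k in atTop, {x : Vn n | uk k x ≤ (t : EReal)} = ∅) ∧
      ({x : Vn n | u x ≤ (t : EReal)}.Nonempty →
          (∀ᶠ k in atTop, {x : Vn n | uk k x ≤ (t : EReal)}.Nonempty) ∧
          Tendsto (fun k => Metric.hausdorffDist
              {x : Vn n | uk k x ≤ (t : EReal)} {x : Vn n | u x ≤ (t : EReal)})
            atTop (𝓝 0))) :
    ∀ x : Vn n, ∃ xk : ℕ → Vn n, Tendsto xk atTop (𝓝 x) ∧
      Tendsto (fun k => uk k (xk k)) atTop (𝓝 (u x)) := by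
  classical
  obtain ⟨z₀, m, hz₀, hinf⟩ := exists_min hu
  have hmle : ∀ y, (m : EReal) ≤ u y := fun y => hinf ▸ iInf_le u y
  intro x
  by_cases htop : u x = ⊤
  · -- constant sequence works
    refine ⟨fun _ => x, tendsto_const_nhds, ?_⟩
    rw [htop, EReal.tendsto_nhds_top_iff_real]
    intro r
    set t : ℝ := max r m + 1 with htdef
    have htm : m < t := by simp only [htdef]; have := le_max_right r m; linarith
    have htr : r < t := by simp only [htdef]; have := le_max_left r m; linarith
    have htne : (t : EReal) ≠ ⨅ y : Vn n, u y := by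
      rw [hinf]; exact_mod_cast htm.ne'
    have hAne : {y : Vn n | u y ≤ (t : EReal)}.Nonempty :=
      ⟨z₀, by rw [mem_setOf_eq, hz₀]; exact_mod_cast htm.le⟩
    obtain ⟨hne_ev, htend⟩ := (H t htne).2 hAne
    set A := {y : Vn n | u y ≤ (t : EReal)} with hA
    have hxA : x ∉ A := by
      intro h
      rw [mem_setOf_eq, htop, top_le_iff] at h
      exact absurd h.symm (by simp)
    have hd : 0 < infDist x A :=
      ((sub_closed hu (t : EReal)).notMem_iff_infDist_pos hAne).1 hxA
    set d := infDist x A with hdd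
    have hev : ∀ᶠ k in atTop,
        Metric.hausdorffDist {y : Vn n | uk k y ≤ (t : EReal)} A < d/2 ∧
        {y : Vn n | uk k y ≤ (t : EReal)}.Nonempty := by
      have h1 : ∀ᶠ k in atTop, Metric.hausdorffDist
          {y : Vn n | uk k y ≤ (t : EReal)} A < d/2 := by
        obtain ⟨N, hN⟩ := Metric.tendsto_atTop.1 htend (d/2) (by linarith)
        refine eventually_atTop.2 ⟨N, fun k hkN => ?_⟩
        have := hN k hkN
        rw [Real.dist_eq, sub_zero] at this
        exact lt_of_le_of_lt (le_abs_self _) this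
      filter_upwards [h1, hne_ev] with k a b using ⟨a, b⟩
    refine hev.mono ?_
    rintro k ⟨hk1, hk2⟩
    by_contra hcon
    push_neg at hcon
    have hmem : x ∈ {y : Vn n | uk k y ≤ (t : EReal)} := by
      rw [mem_setOf_eq]
      exact hcon.trans (by exact_mod_cast htr.le)
    have hedist : EMetric.hausdorffEdist {y : Vn n | uk k y ≤ (t : EReal)} A ≠ ⊤ :=
      Metric.hausdorffEdist_ne_top_of_nonempty_of_bounded hk2 hAne
        (sub_isBounded (hk k) t) (sub_isBounded hu t)
    have h5 : infDist x A ≤ Metric.hausdorffDist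
        {y : Vn n | uk k y ≤ (t : EReal)} A :=
      Metric.infDist_le_hausdorffDist_of_mem hmem hedist
    linarith
  · -- u x is real
    have hbot : u x ≠ ⊥ := hu.1.2.2.1 x
    set r : ℝ := (u x).toReal with hr
    have hxr : u x = (r : EReal) := (EReal.coe_toReal htop hbot).symm
    have hmr : m ≤ r := by
      have := hmle x
      rw [hxr, EReal.coe_le_coe_iff] at this
      exact this
    have hQ : ∀ j : ℕ, ∀ᶠ k in atTop, ∃ w,
        uk k w ≤ ((r + 1/(j+1) : ℝ) : EReal) ∧ dist w x ≤ 1/(j+1) := by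
      intro j
      set t : ℝ := r + 1/(j+1) with htdef
      have hjpos : (0:ℝ) < 1/((j:ℝ)+1) := by positivity
      have hrt : r < t := by simp only [htdef]; push_cast; linarith
      have htm : m < t := lt_of_le_of_lt hmr hrt
      have htne : (t : EReal) ≠ ⨅ y : Vn n, u y := by
        rw [hinf]; exact_mod_cast htm.ne'
      have hxA : x ∈ {y : Vn n | u y ≤ (t : EReal)} := by
        rw [mem_setOf_eq, hxr]; exact_mod_cast hrt.le
      obtain ⟨hne_ev, htend⟩ := (H t htne).2 ⟨x, hxA⟩
      set A := {y : Vn n | u y ≤ (t : EReal)} with hA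
      have h1 : ∀ᶠ k in atTop, Metric.hausdorffDist
          {y : Vn n | uk k y ≤ (t : EReal)} A < 1/(2*((j:ℝ)+1)) := by
        obtain ⟨N, hN⟩ := Metric.tendsto_atTop.1 htend (1/(2*((j:ℝ)+1))) (by positivity)
        refine eventually_atTop.2 ⟨N, fun k hkN => ?_⟩
        have := hN k hkN
        rw [Real.dist_eq, sub_zero] at this
        exact lt_of_le_of_lt (le_abs_self _) this
      filter_upwards [h1, hne_ev] with k hk1 hk2
      have hedist : EMetric.hausdorffEdist A {y : Vn n | uk k y ≤ (t : EReal)} ≠ ⊤ :=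
        Metric.hausdorffEdist_ne_top_of_nonempty_of_bounded ⟨x, hxA⟩ hk2
          (sub_isBounded hu t) (sub_isBounded (hk k) t)
      have h5 : infDist x {y : Vn n | uk k y ≤ (t : EReal)} ≤
          Metric.hausdorffDist A {y : Vn n | uk k y ≤ (t : EReal)} :=
        Metric.infDist_le_hausdorffDist_of_mem hxA hedist
      rw [Metric.hausdorffDist_comm] at h5
      have h6 : infDist x {y : Vn n | uk k y ≤ (t : EReal)} < 1/((j:ℝ)+1) := by
        have : 1/(2*((j:ℝ)+1)) < 1/((j:ℝ)+1) := by
          rw [div_lt_div_iff₀ (by positivity) (by positivity)]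
          nlinarith
        linarith
      obtain ⟨w, hw1, hw2⟩ := (Metric.infDist_lt_iff hk2).1 h6
      exact ⟨w, hw1, by rw [dist_comm] at hw2; exact hw2.le⟩
    choose K hK using fun j => eventually_atTop.1 (hQ j)
    set N : ℕ → ℕ := fun j => (Finset.range (j+1)).sup K + j with hN
    have hNmono : Monotone N := by
      intro i j hij
      simp only [hN]
      exact add_le_add (Finset.sup_mono (by simp [Finset.range_subset]; omega)) hij
    have hNj : ∀ j, j ≤ N j := fun j => Nat.le_add_left j _
    have hNK : ∀ j, K j ≤ N j :=
      fun j => le_trans (Finset.le_sup (Finset.self_mem_range_succ j)) (Nat.le_add_right _ j)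
    set jf : ℕ → ℕ := fun k => Nat.findGreatest (fun j => N j ≤ k) k with hjf
    have key : ∀ k, N 0 ≤ k → ∃ w, uk k w ≤ ((r + 1/(jf k+1) : ℝ) : EReal) ∧
        dist w x ≤ 1/(jf k+1) := by
      intro k hk0
      have hPj : N (jf k) ≤ k := Nat.findGreatest_spec (P := fun j => N j ≤ k) (Nat.zero_le k) hk0
      exact hK (jf k) k (le_trans (hNK _) hPj)
    set xk : ℕ → Vn n := fun k => if h : N 0 ≤ k then Classical.choose (key k h) else x
      with hxkdef
    have hjf_ge : ∀ j k, N j ≤ k → j ≤ jf k :=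
      fun j k h => Nat.le_findGreatest (P := fun j => N j ≤ k) (le_trans (hNj j) h) h
    have hxk_spec : ∀ k, ∀ h : N 0 ≤ k,
        uk k (xk k) ≤ ((r + 1/(jf k+1) : ℝ) : EReal) ∧ dist (xk k) x ≤ 1/(jf k+1) := by
      intro k h
      simp only [hxkdef, dif_pos h]
      exact Classical.choose_spec (key k h)
    have hper : ∀ j : ℕ, ∀ᶠ k in atTop,
        uk k (xk k) ≤ ((r + 1/(j+1) : ℝ) : EReal) ∧ dist (xk k) x ≤ 1/((j:ℝ)+1) := by
      intro j
      refine eventually_atTop.2 ⟨N j, fun k hkj => ?_⟩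
      have h0 : N 0 ≤ k := le_trans (hNmono (Nat.zero_le j)) hkj
      obtain ⟨h1, h2⟩ := hxk_spec k h0
      have hjle : j ≤ jf k := hjf_ge j k hkj
      have hinv : 1/((jf k : ℝ)+1) ≤ 1/((j:ℝ)+1) := by
        apply one_div_le_one_div_of_le (by positivity)
        have : (j:ℝ) ≤ (jf k : ℝ) := by exact_mod_cast hjle
        linarith
      constructor
      · refine h1.trans ?_
        rw [EReal.coe_le_coe_iff]
        push_cast
        linarith
      · push_cast at h2
        linarith
    have htendx : Tendsto xk atTop (𝓝 x) := by
      rw [Metric.tendsto_atTop]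
      intro ε hε
      obtain ⟨j, hj⟩ := exists_nat_one_div_lt hε
      obtain ⟨N', hN'⟩ := eventually_atTop.1 (hper j)
      refine ⟨N', fun k hk' => ?_⟩
      refine lt_of_le_of_lt (hN' k hk').2 ?_
      exact_mod_cast hj
    have hlimsup : limsup (fun k => uk k (xk k)) atTop ≤ (r : EReal) := by
      by_contra hc
      push_neg at hc
      obtain ⟨c, hc1, hc2⟩ := EReal.exists_between_coe_real hc
      rw [EReal.coe_lt_coe_iff] at hc1
      obtain ⟨j, hj⟩ := exists_nat_one_div_lt (show (0:ℝ) < c - r by linarith)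
      have hls := limsup_le_of_le (by isBoundedDefault)
        ((hper j).mono (fun k hk' => hk'.1))
      have h2 : ((r + 1/(j+1) : ℝ) : EReal) < (c : EReal) := by
        rw [EReal.coe_lt_coe_iff]
        push_cast at hj ⊢
        linarith
      exact absurd ((hls.trans_lt h2).trans hc2) (lt_irrefl _)
    have hliminf : (r : EReal) ≤ liminf (fun k => uk k (xk k)) atTop := by
      have := backward_liminf hk hu H x xk htendx
      rwa [hxr] at this
    refine ⟨xk, htendx, ?_⟩
    rw [hxr]
    exact tendsto_of_le_liminf_of_limsup_le hliminf hlimsup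

/-- **Epi-convergence versus Hausdorff convergence of sublevel sets**
(Lemma 2.2): for coercive convex functions, `u_k` epi-converges to `u` if and
only if for every `t ∈ ℝ` different from the minimum of `u`, the sublevel
sets `{u_k ≤ t}` converge to `{u ≤ t}` (empty sets eventually if
`{u ≤ t} = ∅`; otherwise eventually nonempty with Hausdorff distance
tending to `0`). -/
theorem epiConvergence_iff_sublevel_convergence (n : ℕ)
    (uk : ℕ → Vn n → EReal) (u : Vn n → EReal)
    (hk : ∀ k, uk k ∈ ConvCoe n) (hu : u ∈ ConvCoe n) :
    EpiConverges uk u ↔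
      ∀ t : ℝ, (t : EReal) ≠ (⨅ x : Vn n, u x) →
        ({x : Vn n | u x ≤ (t : EReal)} = ∅ →
            ∀ᶠ k in atTop, {x : Vn n | uk k x ≤ (t : EReal)} = ∅) ∧
        ({x : Vn n | u x ≤ (t : EReal)}.Nonempty →
            (∀ᶠ k in atTop, {x : Vn n | uk k x ≤ (t : EReal)}.Nonempty) ∧
            Tendsto (fun k => Metric.hausdorffDist
                {x : Vn n | uk k x ≤ (t : EReal)} {x : Vn n | u x ≤ (t : EReal)})
              atTop (𝓝 0)) := by
  constructor
  · intro hepi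
    exact forward_dir hk hu hepi
  · intro H
    intro x
    exact ⟨fun xk hxk => backward_liminf hk hu H x xk hxk,
      backward_recovery hk hu H x⟩
end
end

section
/- If Z : Conv(ℝⁿ) → ℝ is a continuous valuation, then for every m ∈ ℕ and all u₁,…,u_m ∈ Conv(ℝⁿ) such that the pointwise minimum u₁ ∧ ⋯ ∧ u_m belongs to Conv(ℝⁿ) and such that u_J := ⋁_{j∈J} u_j belongs to Conv(ℝⁿ) for every nonempty J ⊂ {1,…,m}, one has Z(u₁ ∧ ⋯ ∧ u_m) = Σ_{∅≠J⊂{1,…,m}} (−1)^{|J|−1} Z(u_J). -/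
open Filter Topology MeasureTheory

noncomputable section

namespace IEaux

open scoped Classical

variable {n : ℕ}

/-! ### EReal helpers -/

lemma mul_coe_ne_bot {t : ℝ} (ht : 0 < t) {a : EReal} (ha : a ≠ ⊥) : (t : EReal) * a ≠ ⊥ := by
  induction a with
  | bot => exact absurd rfl ha
  | coe r => rw [← EReal.coe_mul]; exact EReal.coe_ne_bot _
  | top => rw [EReal.mul_top_of_pos (by exact_mod_cast ht)]; exact (bot_lt_top).ne'

lemma mul_coe_top {t : ℝ} (ht : 0 < t) : (t : EReal) * (⊤ : EReal) = ⊤ :=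
  EReal.mul_top_of_pos (by exact_mod_cast ht)

lemma comb_le_comb {a a' b b' : EReal} {t s : ℝ} (h : a ≤ a') (h' : b ≤ b')
    (ht : 0 ≤ t) (hs : 0 ≤ s) :
    (t : EReal) * a + (s : EReal) * b ≤ (t : EReal) * a' + (s : EReal) * b' :=
  add_le_add (mul_le_mul_of_nonneg_left h (by exact_mod_cast ht))
    (mul_le_mul_of_nonneg_left h' (by exact_mod_cast hs))

lemma coe_comb (t s r r' : ℝ) :
    (t : EReal) * (r : EReal) + (s : EReal) * (r' : EReal) = ((t * r + s * r' : ℝ) : EReal) := by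
  rw [← EReal.coe_mul, ← EReal.coe_mul, ← EReal.coe_add]

lemma rhs_top_left {t : ℝ} (ht : 0 < t) (ht' : t < 1) {b : EReal} (hb : b ≠ ⊥) :
    (t : EReal) * (⊤ : EReal) + ((1 - t : ℝ) : EReal) * b = ⊤ := by
  rw [mul_coe_top ht]
  exact EReal.top_add_of_ne_bot (mul_coe_ne_bot (by linarith) hb)

lemma rhs_top_right {t : ℝ} (ht : 0 < t) (ht' : t < 1) {a : EReal} (ha : a ≠ ⊥) :
    (t : EReal) * a + ((1 - t : ℝ) : EReal) * (⊤ : EReal) = ⊤ := by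
  rw [mul_coe_top (by linarith : (0:ℝ) < 1 - t)]
  exact EReal.add_top_of_ne_bot (mul_coe_ne_bot ht ha)

/-! ### the class `Cls` : convex, lsc, never `⊥` (possibly improper) -/

def Cls (n : ℕ) : Set (Vn n → EReal) :=
  {f | IsConvexFn f ∧ LowerSemicontinuous f ∧ ∀ x, f x ≠ ⊥}

lemma mem_ConvSet_iff {u : Vn n → EReal} :
    u ∈ ConvSet n ↔ u ∈ Cls n ∧ ∃ x, u x ≠ ⊤ := by
  constructor
  · rintro ⟨h1, h2, h3, h4⟩; exact ⟨⟨h1, h2, h3⟩, h4⟩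
  · rintro ⟨⟨h1, h2, h3⟩, h4⟩; exact ⟨h1, h2, h3, h4⟩

/-! ### convexity closure lemmas -/

lemma icf_sup {u v : Vn n → EReal} (hu : IsConvexFn u) (hv : IsConvexFn v) :
    IsConvexFn (fun x => u x ⊔ v x) := by
  intro x y t ht ht'
  refine sup_le ?_ ?_
  · exact (hu x y t ht ht').trans (comb_le_comb le_sup_left le_sup_left ht.le (by linarith))
  · exact (hv x y t ht ht').trans (comb_le_comb le_sup_right le_sup_right ht.le (by linarith))

lemma icf_add {u v : Vn n → EReal} (hu : IsConvexFn u) (hv : IsConvexFn v)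
    (hub : ∀ x, u x ≠ ⊥) (hvb : ∀ x, v x ≠ ⊥) :
    IsConvexFn (fun x => u x + v x) := by
  intro x y t ht ht'
  dsimp only
  by_cases hux : u x = ⊤
  · have : u x + v x = ⊤ := by rw [hux]; exact EReal.top_add_of_ne_bot (hvb x)
    rw [this, rhs_top_left ht ht' (fun h => (EReal.add_eq_bot_iff.1 h).elim (hub y) (hvb y))]
    exact le_top
  by_cases hvx : v x = ⊤
  · have : u x + v x = ⊤ := by rw [hvx]; exact EReal.add_top_of_ne_bot (hub x)
    rw [this, rhs_top_left ht ht' (fun h => (EReal.add_eq_bot_iff.1 h).elim (hub y) (hvb y))]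
    exact le_top
  by_cases huy : u y = ⊤
  · have : u y + v y = ⊤ := by rw [huy]; exact EReal.top_add_of_ne_bot (hvb y)
    rw [this, rhs_top_right ht ht' (fun h => (EReal.add_eq_bot_iff.1 h).elim (hub x) (hvb x))]
    exact le_top
  by_cases hvy : v y = ⊤
  · have : u y + v y = ⊤ := by rw [hvy]; exact EReal.add_top_of_ne_bot (hub y)
    rw [this, rhs_top_right ht ht' (fun h => (EReal.add_eq_bot_iff.1 h).elim (hub x) (hvb x))]
    exact le_top
  · have h1 := hu x y t ht ht'
    have h2 := hv x y t ht ht'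
    lift u x to ℝ using ⟨hux, hub x⟩ with a
    lift v x to ℝ using ⟨hvx, hvb x⟩ with b
    lift u y to ℝ using ⟨huy, hub y⟩ with c
    lift v y to ℝ using ⟨hvy, hvb y⟩ with d
    rw [coe_comb] at h1 h2
    calc u (t • x + (1-t) • y) + v (t • x + (1-t) • y)
        ≤ ((t * a + (1-t) * c : ℝ) : EReal) + ((t * b + (1-t) * d : ℝ) : EReal) :=
          add_le_add h1 h2
      _ = (t : EReal) * ((a : EReal) + (b : EReal)) + ((1 - t : ℝ) : EReal) * ((c : EReal) + (d : EReal)) := by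
          norm_cast
          ring

/-! ### lower semicontinuity closure lemmas -/

lemma lsc_sup {f g : Vn n → EReal} (hf : LowerSemicontinuous f) (hg : LowerSemicontinuous g) :
    LowerSemicontinuous (fun x => f x ⊔ g x) := by
  intro x y hy
  rcases lt_sup_iff.1 hy with h | h
  · exact (hf x y h).mono fun x' h' => lt_of_lt_of_le h' le_sup_left
  · exact (hg x y h).mono fun x' h' => lt_of_lt_of_le h' le_sup_right

lemma exists_lt_reals {f g : Vn n → EReal} {x : Vn n} {y : EReal}
    (hy : y < f x + g x) (hf : f x ≠ ⊥) (hg : g x ≠ ⊥) :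
    ∃ a b : ℝ, (a : EReal) < f x ∧ (b : EReal) < g x ∧ y ≤ (a : EReal) + (b : EReal) := by
  by_cases hft : f x = ⊤
  · by_cases hgt : g x = ⊤
    · rcases eq_bot_or_bot_lt y with hyb | hyb
      · exact ⟨0, 0, by rw [hft]; exact EReal.coe_lt_top _, by rw [hgt]; exact EReal.coe_lt_top _,
          by rw [hyb]; exact bot_le⟩
      · obtain ⟨r, hr1, hr2⟩ := EReal.lt_iff_exists_real_btwn.1 (lt_of_lt_of_le hy le_top)
        exact ⟨r, 0, by rw [hft]; exact EReal.coe_lt_top _, by rw [hgt]; exact EReal.coe_lt_top _,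
          by rw [← EReal.coe_add, add_zero]; exact hr1.le⟩
    · lift g x to ℝ using ⟨hgt, hg⟩ with s
      rcases eq_bot_or_bot_lt y with hyb | hyb
      · exact ⟨0, s - 1, by rw [hft]; exact EReal.coe_lt_top _, by exact_mod_cast sub_one_lt s,
          by rw [hyb]; exact bot_le⟩
      · obtain ⟨r, hr1, hr2⟩ := EReal.lt_iff_exists_real_btwn.1 (lt_of_lt_of_le hy le_top)
        refine ⟨r - (s - 1), s - 1, by rw [hft]; exact EReal.coe_lt_top _,
          by exact_mod_cast sub_one_lt s, ?_⟩
        rw [← EReal.coe_add]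
        have : r - (s - 1) + (s - 1) = r := by ring
        rw [this]; exact hr1.le
  · lift f x to ℝ using ⟨hft, hf⟩ with p
    by_cases hgt : g x = ⊤
    · rcases eq_bot_or_bot_lt y with hyb | hyb
      · exact ⟨p - 1, 0, by exact_mod_cast sub_one_lt p, by rw [hgt]; exact EReal.coe_lt_top _,
          by rw [hyb]; exact bot_le⟩
      · obtain ⟨r, hr1, hr2⟩ := EReal.lt_iff_exists_real_btwn.1 (lt_of_lt_of_le hy le_top)
        refine ⟨p - 1, r - (p - 1), by exact_mod_cast sub_one_lt p,
          by rw [hgt]; exact EReal.coe_lt_top _, ?_⟩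
        rw [← EReal.coe_add]
        have : p - 1 + (r - (p - 1)) = r := by ring
        rw [this]; exact hr1.le
    · lift g x to ℝ using ⟨hgt, hg⟩ with s
      rcases eq_bot_or_bot_lt y with hyb | hyb
      · exact ⟨p - 1, s - 1, by exact_mod_cast sub_one_lt p, by exact_mod_cast sub_one_lt s,
          by rw [hyb]; exact bot_le⟩
      · have hyt : y ≠ ⊤ := by
          intro h; rw [h] at hy
          exact absurd hy (not_lt.2 le_top)
        lift y to ℝ using ⟨hyt, hyb.ne'⟩ with r
        rw [← EReal.coe_add, EReal.coe_lt_coe_iff] at hy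
        refine ⟨p - (p + s - r)/2, s - (p + s - r)/2, ?_, ?_, ?_⟩
        · exact_mod_cast sub_lt_self p (by linarith)
        · exact_mod_cast sub_lt_self s (by linarith)
        · rw [← EReal.coe_add]
          have : p - (p + s - r)/2 + (s - (p + s - r)/2) = r := by ring
          rw [this]

lemma lsc_add {f g : Vn n → EReal} (hf : LowerSemicontinuous f) (hg : LowerSemicontinuous g)
    (hfb : ∀ x, f x ≠ ⊥) (hgb : ∀ x, g x ≠ ⊥) :
    LowerSemicontinuous (fun x => f x + g x) := by
  intro x y hy
  obtain ⟨a, b, ha, hb, hy'⟩ := exists_lt_reals hy (hfb x) (hgb x)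
  filter_upwards [hf x a ha, hg x b hb] with x' h1 h2
  exact lt_of_le_of_lt hy' (EReal.add_lt_add h1 h2)

/-! ### indicator functions of closed convex sets -/

def ind (s : Set (Vn n)) : Vn n → EReal := fun x => if x ∈ s then (0 : EReal) else ⊤

lemma ind_ne_bot (s : Set (Vn n)) (x : Vn n) : ind s x ≠ ⊥ := by
  unfold ind; split <;> simp

lemma ind_of_mem {s : Set (Vn n)} {x : Vn n} (h : x ∈ s) : ind s x = 0 := if_pos h

lemma ind_of_not_mem {s : Set (Vn n)} {x : Vn n} (h : x ∉ s) : ind s x = ⊤ := if_neg h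

lemma icf_ind {s : Set (Vn n)} (hs : Convex ℝ s) : IsConvexFn (ind s) := by
  intro x y t ht ht'
  by_cases hx : x ∈ s
  · by_cases hy : y ∈ s
    · have hz : t • x + (1 - t) • y ∈ s := hs hx hy ht.le (by linarith) (by ring)
      rw [ind_of_mem hz, ind_of_mem hx, ind_of_mem hy, mul_zero, mul_zero, add_zero]
    · rw [ind_of_not_mem hy, rhs_top_right ht ht' (ind_ne_bot s x)]
      exact le_top
  · rw [ind_of_not_mem hx, rhs_top_left ht ht' (ind_ne_bot s y)]
    exact le_top

lemma lsc_ind {s : Set (Vn n)} (hs : IsClosed s) : LowerSemicontinuous (ind s) := by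
  intro x y hy
  by_cases hx : x ∈ s
  · rw [ind_of_mem hx] at hy
    refine Eventually.of_forall fun x' => lt_of_lt_of_le hy ?_
    unfold ind; split
    · exact le_refl _
    · exact le_top
  · rw [ind_of_not_mem hx] at hy
    filter_upwards [hs.isOpen_compl.mem_nhds hx] with x' hx'
    rw [ind_of_not_mem hx']; exact hy

/-! ### domain convexity, etc. -/

lemma comb_lt_top {a b : EReal} {t : ℝ} (ht : 0 < t) (ht' : t < 1)
    (ha : a ≠ ⊤) (ha' : a ≠ ⊥) (hb : b ≠ ⊤) (hb' : b ≠ ⊥) :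
    (t : EReal) * a + ((1 - t : ℝ) : EReal) * b < ⊤ := by
  lift a to ℝ using ⟨ha, ha'⟩
  lift b to ℝ using ⟨hb, hb'⟩
  rw [coe_comb]
  exact EReal.coe_lt_top _

lemma dom_convex {f : Vn n → EReal} (hf : IsConvexFn f) (hfb : ∀ x, f x ≠ ⊥) :
    Convex ℝ {x | f x ≠ ⊤} := by
  intro x hx y hy a b ha hb hab
  rcases eq_or_lt_of_le ha with ha0 | ha0
  · have hb1 : b = 1 := by linarith
    rw [← ha0, hb1, zero_smul, one_smul, zero_add]; exact hy
  rcases eq_or_lt_of_le hb with hb0 | hb0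
  · have ha1 : a = 1 := by linarith
    rw [← hb0, ha1, zero_smul, one_smul, add_zero]; exact hx
  · have hb' : b = 1 - a := by linarith
    have ha1 : a < 1 := by linarith
    show f (a • x + b • y) ≠ ⊤
    rw [hb']
    exact ne_top_of_le_ne_top (comb_lt_top ha0 ha1 hx (hfb x) hy (hfb y)).ne (hf x y a ha0 ha1)

/-! ### affine functionals -/

abbrev Aff (n : ℕ) := (Vn n →L[ℝ] ℝ) × ℝ

def aev (p : Aff n) (x : Vn n) : ℝ := p.1 x + p.2

lemma aev_comb (p : Aff n) (x y : Vn n) (a b : ℝ) (hab : a + b = 1) :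
    aev p (a • x + b • y) = a * aev p x + b * aev p y := by
  unfold aev
  rw [map_add, p.1.map_smul, p.1.map_smul]
  simp only [smul_eq_mul]
  linear_combination (-p.2) * hab

lemma aev_cont (p : Aff n) : Continuous (aev p) := p.1.continuous.add continuous_const

def psub (p q : Aff n) : Aff n := (p.1 - q.1, p.2 - q.2)

lemma aev_psub (p q : Aff n) (x : Vn n) : aev (psub p q) x = aev p x - aev q x := by
  unfold aev psub
  simp only [ContinuousLinearMap.sub_apply]
  ring

/-! ### half-spaces -/

def Hp (φ : Aff n) : Set (Vn n) := {x | 0 ≤ aev φ x}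
def Hm (φ : Aff n) : Set (Vn n) := {x | aev φ x ≤ 0}
def Hz (φ : Aff n) : Set (Vn n) := {x | aev φ x = 0}

lemma convex_aff_halfspace (φ : Aff n) (s : Set ℝ) (hs : Convex ℝ s) :
    Convex ℝ {x : Vn n | aev φ x ∈ s} := by
  intro x hx y hy a b ha hb hab
  show aev φ (a • x + b • y) ∈ s
  rw [aev_comb φ x y a b hab]
  exact hs hx hy ha hb hab

lemma convex_Hp (φ : Aff n) : Convex ℝ (Hp φ) := convex_aff_halfspace φ (Set.Ici 0) (convex_Ici 0)
lemma convex_Hm (φ : Aff n) : Convex ℝ (Hm φ) := convex_aff_halfspace φ (Set.Iic 0) (convex_Iic 0)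
lemma convex_Hz (φ : Aff n) : Convex ℝ (Hz φ) := convex_aff_halfspace φ {(0:ℝ)} (convex_singleton 0)

lemma closed_Hp (φ : Aff n) : IsClosed (Hp φ) := isClosed_le continuous_const (aev_cont φ)
lemma closed_Hm (φ : Aff n) : IsClosed (Hm φ) := isClosed_le (aev_cont φ) continuous_const
lemma closed_Hz (φ : Aff n) : IsClosed (Hz φ) :=
  isClosed_eq (aev_cont φ) continuous_const

lemma ivt_aff {f : Vn n → EReal} (hf : IsConvexFn f) (hfb : ∀ x, f x ≠ ⊥) (φ : Aff n)
    {x y : Vn n} (hx : f x ≠ ⊤) (hy : f y ≠ ⊤) (hxp : 0 ≤ aev φ x) (hym : aev φ y ≤ 0) :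
    ∃ z, f z ≠ ⊤ ∧ aev φ z = 0 := by
  rcases eq_or_lt_of_le hxp with h0 | hxp'
  · exact ⟨x, hx, h0.symm⟩
  rcases eq_or_lt_of_le hym with h0 | hym'
  · exact ⟨y, hy, h0⟩
  · set t : ℝ := aev φ x / (aev φ x - aev φ y) with htdef
    have hden : 0 < aev φ x - aev φ y := by linarith
    have ht0 : 0 < t := div_pos hxp' hden
    have ht1 : t ≤ 1 := by
      rw [div_le_one hden]; linarith
    set z := (1 - t) • x + t • y with hzdef
    have hz : aev φ z = 0 := by
      rw [hzdef, aev_comb φ x y (1 - t) t (by ring)]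
      have h1 : (1 - t) * aev φ x + t * aev φ y = aev φ x - t * (aev φ x - aev φ y) := by ring
      rw [h1, htdef, div_mul_cancel₀ _ hden.ne', sub_self]
    refine ⟨z, ?_, hz⟩
    have hzmem : z ∈ {x | f x ≠ ⊤} :=
      dom_convex hf hfb hx hy (by linarith) ht0.le (by ring)
    exact hzmem

/-! ### finite sups of affine/convex real functions -/

lemma cont_sup' {ι : Type} {s : Finset ι} (hs : s.Nonempty) {g : ι → Vn n → ℝ}
    (hg : ∀ i, Continuous (g i)) : Continuous (fun x => s.sup' hs (fun i => g i x)) := by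
  induction hs using Finset.Nonempty.cons_induction with
  | singleton a => simpa using hg a
  | cons a s ha hs ih =>
      have heq : (fun x => (Finset.cons a s ha).sup' (Finset.cons_nonempty ha) (fun i => g i x))
          = fun x => g a x ⊔ s.sup' hs (fun i => g i x) := by
        funext x; rw [Finset.sup'_cons hs]
      rw [heq]
      exact (hg a).max ih

lemma ineq_sup' {ι : Type} {s : Finset ι} (hs : s.Nonempty) {g : ι → Vn n → ℝ}
    (hg : ∀ i (x y : Vn n) (t : ℝ), 0 < t → t < 1 →
      g i (t • x + (1 - t) • y) ≤ t * g i x + (1 - t) * g i y)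
    (x y : Vn n) (t : ℝ) (ht : 0 < t) (ht' : t < 1) :
    s.sup' hs (fun i => g i (t • x + (1 - t) • y))
      ≤ t * s.sup' hs (fun i => g i x) + (1 - t) * s.sup' hs (fun i => g i y) := by
  apply Finset.sup'_le
  intro i hi
  refine (hg i x y t ht ht').trans ?_
  have h1 : g i x ≤ s.sup' hs (fun i => g i x) := Finset.le_sup' (fun i => g i x) hi
  have h2 : g i y ≤ s.sup' hs (fun i => g i y) := Finset.le_sup' (fun i => g i y) hi
  nlinarith [h1, h2]

lemma coe_sup' {ι : Type} {s : Finset ι} (hs : s.Nonempty) (g : ι → ℝ) :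
    ((s.sup' hs g : ℝ) : EReal) = s.sup' hs (fun i => ((g i : ℝ) : EReal)) := by
  apply Finset.comp_sup'_eq_sup'_comp
  intro a b
  rcases le_total a b with h | h
  · rw [sup_eq_right.2 h, sup_eq_right.2 (by exact_mod_cast h : ((a:ℝ):EReal) ≤ b)]
  · rw [sup_eq_left.2 h, sup_eq_left.2 (by exact_mod_cast h : ((b:ℝ):EReal) ≤ a)]

/-! ### The inclusion-exclusion defect functional -/

section Core

variable (Z : (Vn n → EReal) → ℝ) {m : ℕ} (q : Fin m → Vn n → ℝ)

/-- pointwise sup over `J` of the (real-valued) functions `q j`, as `EReal`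
(equal to `⊥` if `J = ∅`). -/
def QJ (J : Finset (Fin m)) (x : Vn n) : EReal := J.sup (fun j => ((q j x : ℝ) : EReal))

def Jset (m : ℕ) : Finset (Finset (Fin m)) :=
  Finset.univ.powerset.filter (fun J => J.Nonempty)

def sgn (J : Finset (Fin m)) : ℝ := (-1 : ℝ) ^ (J.card - 1)

/-- The inclusion–exclusion defect of a context function `f`. -/
def Dv (f : Vn n → EReal) : ℝ :=
  if f ∈ ConvSet n then
    Z f - ∑ J ∈ Jset m, sgn J * Z (fun x => f x ⊔ QJ q J x)
  else 0

lemma QJ_eq {J : Finset (Fin m)} (hJ : J.Nonempty) (x : Vn n) :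
    QJ q J x = ((J.sup' hJ (fun j => q j x) : ℝ) : EReal) := by
  rw [coe_sup' hJ, Finset.sup'_eq_sup hJ]
  rfl

lemma QJ_ne_bot {J : Finset (Fin m)} (hJ : J.Nonempty) (x : Vn n) : QJ q J x ≠ ⊥ := by
  rw [QJ_eq q hJ x]; exact EReal.coe_ne_bot _

variable {q}

/-- context class: `f ∈ Cls` together with the statement that `f ⊔ QJ` behaves well. -/
lemma cls_sup_QJ (hqc : ∀ j, Continuous (q j))
    (hqi : ∀ j (x y : Vn n) (t : ℝ), 0 < t → t < 1 →
      q j (t • x + (1 - t) • y) ≤ t * q j x + (1 - t) * q j y)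
    {f : Vn n → EReal} (hf : f ∈ Cls n) {J : Finset (Fin m)} (hJ : J.Nonempty) :
    (fun x => f x ⊔ QJ q J x) ∈ Cls n := by
  obtain ⟨hicf, hlsc, hnb⟩ := hf
  refine ⟨?_, ?_, ?_⟩
  · have h1 : IsConvexFn (fun x => QJ q J x) := by
      have : (fun x => QJ q J x) = fun x => ((J.sup' hJ (fun j => q j x) : ℝ) : EReal) := by
        funext x; exact QJ_eq q hJ x
      rw [this]
      intro x y t ht ht'
      dsimp only
      have := ineq_sup' hJ (g := fun j => q j) hqi x y t ht ht'
      calc ((J.sup' hJ (fun j => q j (t • x + (1-t) • y)) : ℝ) : EReal)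
          ≤ ((t * J.sup' hJ (fun j => q j x) + (1 - t) * J.sup' hJ (fun j => q j y) : ℝ) : EReal) := by
            exact_mod_cast this
        _ = _ := by rw [← coe_comb]
    exact icf_sup hicf h1
  · apply lsc_sup hlsc
    have : Continuous (fun x => ((J.sup' hJ (fun j => q j x) : ℝ) : EReal)) := by
      rw [EReal.continuous_coe_iff]
      exact cont_sup' hJ hqc
    have h2 : QJ q J = fun x => ((J.sup' hJ (fun j => q j x) : ℝ) : EReal) :=
      funext (QJ_eq q hJ)
    rw [h2]
    exact this.lowerSemicontinuous
  · intro x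
    exact fun h => hnb x (by simpa using (sup_eq_bot_iff.1 h).1)

lemma sup_QJ_top_iff {f : Vn n → EReal} {J : Finset (Fin m)} (hJ : J.Nonempty) (x : Vn n) :
    f x ⊔ QJ q J x = ⊤ ↔ f x = ⊤ := by
  constructor
  · intro h
    rcases le_total (f x) (QJ q J x) with hle | hle
    · rw [sup_eq_right.2 hle] at h
      exact absurd h (by rw [QJ_eq q hJ x]; exact EReal.coe_ne_top _)
    · rw [sup_eq_left.2 hle] at h
      exact h
  · intro h; rw [h, top_sup_eq]

lemma cls_add_ind {f : Vn n → EReal} (hf : f ∈ Cls n) {s : Set (Vn n)}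
    (hconv : Convex ℝ s) (hclosed : IsClosed s) :
    (fun x => f x + ind s x) ∈ Cls n := by
  obtain ⟨hicf, hlsc, hnb⟩ := hf
  exact ⟨icf_add hicf (icf_ind hconv) hnb (ind_ne_bot s),
    lsc_add hlsc (lsc_ind hclosed) hnb (ind_ne_bot s),
    fun x h => (EReal.add_eq_bot_iff.1 h).elim (hnb x) (ind_ne_bot s x)⟩

lemma add_ind_top_iff {f : Vn n → EReal} (hnb : ∀ x, f x ≠ ⊥) {s : Set (Vn n)} {x : Vn n} :
    f x + ind s x = ⊤ ↔ (f x = ⊤ ∨ x ∉ s) := by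
  by_cases hx : x ∈ s
  · rw [ind_of_mem hx, add_zero]
    simp [hx]
  · rw [ind_of_not_mem hx, EReal.add_top_of_ne_bot (hnb x)]
    simp [hx]

lemma val_split (hval : IsValuation (ConvSet n) Z) {g : Vn n → EReal} (hg : g ∈ Cls n) (φ : Aff n)
    (hp : ∃ x, g x ≠ ⊤ ∧ x ∈ Hp φ) (hm : ∃ x, g x ≠ ⊤ ∧ x ∈ Hm φ)
    (hz : ∃ x, g x ≠ ⊤ ∧ x ∈ Hz φ) :
    Z (fun x => g x + ind (Hp φ) x) + Z (fun x => g x + ind (Hm φ) x)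
      = Z g + Z (fun x => g x + ind (Hz φ) x) := by
  have hnb := hg.2.2
  have hsup : (fun x => g x + ind (Hp φ) x) ⊔ (fun x => g x + ind (Hm φ) x)
      = (fun x => g x + ind (Hz φ) x) := by
    funext x
    show (g x + ind (Hp φ) x) ⊔ (g x + ind (Hm φ) x) = g x + ind (Hz φ) x
    rcases lt_trichotomy (aev φ x) 0 with h | h | h
    · rw [ind_of_not_mem (show x ∉ Hp φ from not_le.2 h), ind_of_mem (show x ∈ Hm φ from h.le),
        ind_of_not_mem (show x ∉ Hz φ from h.ne), add_zero,
        EReal.add_top_of_ne_bot (hnb x), top_sup_eq]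
    · rw [ind_of_mem (show x ∈ Hp φ from h.ge), ind_of_mem (show x ∈ Hm φ from h.le),
        ind_of_mem (show x ∈ Hz φ from h), sup_idem]
    · rw [ind_of_mem (show x ∈ Hp φ from h.le), ind_of_not_mem (show x ∉ Hm φ from not_le.2 h),
        ind_of_not_mem (show x ∉ Hz φ from h.ne'), add_zero,
        EReal.add_top_of_ne_bot (hnb x), sup_top_eq]
  have hinf : (fun x => g x + ind (Hp φ) x) ⊓ (fun x => g x + ind (Hm φ) x) = g := by
    funext x
    show (g x + ind (Hp φ) x) ⊓ (g x + ind (Hm φ) x) = g x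
    rcases lt_trichotomy (aev φ x) 0 with h | h | h
    · rw [ind_of_not_mem (show x ∉ Hp φ from not_le.2 h), ind_of_mem (show x ∈ Hm φ from h.le),
        add_zero, EReal.add_top_of_ne_bot (hnb x), top_inf_eq]
    · rw [ind_of_mem (show x ∈ Hp φ from h.ge), ind_of_mem (show x ∈ Hm φ from h.le),
        add_zero, inf_idem]
    · rw [ind_of_mem (show x ∈ Hp φ from h.le), ind_of_not_mem (show x ∉ Hm φ from not_le.2 h),
        add_zero, EReal.add_top_of_ne_bot (hnb x), inf_top_eq]
  have hmp : (fun x => g x + ind (Hp φ) x) ∈ ConvSet n := by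
    refine mem_ConvSet_iff.2 ⟨cls_add_ind hg (convex_Hp φ) (closed_Hp φ), ?_⟩
    obtain ⟨x, hx, hxin⟩ := hp
    exact ⟨x, by rw [ind_of_mem hxin, add_zero]; exact hx⟩
  have hmm : (fun x => g x + ind (Hm φ) x) ∈ ConvSet n := by
    refine mem_ConvSet_iff.2 ⟨cls_add_ind hg (convex_Hm φ) (closed_Hm φ), ?_⟩
    obtain ⟨x, hx, hxin⟩ := hm
    exact ⟨x, by rw [ind_of_mem hxin, add_zero]; exact hx⟩
  have hmz : (fun x => g x + ind (Hz φ) x) ∈ ConvSet n := by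
    refine mem_ConvSet_iff.2 ⟨cls_add_ind hg (convex_Hz φ) (closed_Hz φ), ?_⟩
    obtain ⟨x, hx, hxin⟩ := hz
    exact ⟨x, by rw [ind_of_mem hxin, add_zero]; exact hx⟩
  have hmg : g ∈ ConvSet n := by
    obtain ⟨x, hx, _⟩ := hp
    exact mem_ConvSet_iff.2 ⟨hg, ⟨x, hx⟩⟩
  have hv := hval _ _ hmp hmm (by rw [hsup]; exact hmz) (by rw [hinf]; exact hmg)
  rw [hsup, hinf] at hv
  linarith [hv]

lemma sup_QJ_add_ind_comm {f : Vn n → EReal} (hnb : ∀ x, f x ≠ ⊥) {J : Finset (Fin m)}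
    (s : Set (Vn n)) :
    (fun x => (f x + ind s x) ⊔ QJ q J x) = (fun x => (f x ⊔ QJ q J x) + ind s x) := by
  funext x
  by_cases hx : x ∈ s
  · rw [ind_of_mem hx, add_zero, add_zero]
  · rw [ind_of_not_mem hx, EReal.add_top_of_ne_bot (hnb x), top_sup_eq,
      EReal.add_top_of_ne_bot (fun h => hnb x (sup_eq_bot_iff.1 h).1)]

lemma Dv_improper {f : Vn n → EReal} (h : ∀ x, f x = ⊤) : Dv Z q f = 0 := by
  unfold Dv
  rw [if_neg]
  rintro ⟨_, _, _, ⟨x, hx⟩⟩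
  exact hx (h x)

lemma cut (hval : IsValuation (ConvSet n) Z)
    (hqc : ∀ j, Continuous (q j))
    (hqi : ∀ j (x y : Vn n) (t : ℝ), 0 < t → t < 1 →
      q j (t • x + (1 - t) • y) ≤ t * q j x + (1 - t) * q j y)
    {f : Vn n → EReal} (hf : f ∈ Cls n) (φ : Aff n) :
    Dv Z q f = Dv Z q (fun x => f x + ind (Hp φ) x) + Dv Z q (fun x => f x + ind (Hm φ) x)
      - Dv Z q (fun x => f x + ind (Hz φ) x) := by
  have hnb := hf.2.2
  by_cases hprop : ∀ x, f x = ⊤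
  · have h1 : ∀ s : Set (Vn n), ∀ x, f x + ind s x = ⊤ := fun s x => by
      rw [hprop x]; exact EReal.top_add_of_ne_bot (ind_ne_bot s x)
    rw [Dv_improper Z hprop, Dv_improper Z (h1 _), Dv_improper Z (h1 _), Dv_improper Z (h1 _)]
    ring
  · push_neg at hprop
    by_cases hP : ∃ x, f x ≠ ⊤ ∧ x ∈ Hp φ
    · by_cases hM : ∃ x, f x ≠ ⊤ ∧ x ∈ Hm φ
      · -- main case
        obtain ⟨x₁, hx₁, hx₁p⟩ := hP
        obtain ⟨x₂, hx₂, hx₂m⟩ := hM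
        obtain ⟨z, hzdom, hzeq⟩ := ivt_aff hf.1 hnb φ hx₁ hx₂ hx₁p hx₂m
        have hZex : ∃ x, f x ≠ ⊤ ∧ x ∈ Hz φ := ⟨z, hzdom, hzeq⟩
        have hfC : f ∈ ConvSet n := mem_ConvSet_iff.2 ⟨hf, hprop⟩
        have hfpC : (fun x => f x + ind (Hp φ) x) ∈ ConvSet n := by
          refine mem_ConvSet_iff.2 ⟨cls_add_ind hf (convex_Hp φ) (closed_Hp φ), ?_⟩
          exact ⟨x₁, by rw [ind_of_mem hx₁p, add_zero]; exact hx₁⟩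
        have hfmC : (fun x => f x + ind (Hm φ) x) ∈ ConvSet n := by
          refine mem_ConvSet_iff.2 ⟨cls_add_ind hf (convex_Hm φ) (closed_Hm φ), ?_⟩
          exact ⟨x₂, by rw [ind_of_mem hx₂m, add_zero]; exact hx₂⟩
        have hfzC : (fun x => f x + ind (Hz φ) x) ∈ ConvSet n := by
          refine mem_ConvSet_iff.2 ⟨cls_add_ind hf (convex_Hz φ) (closed_Hz φ), ?_⟩
          exact ⟨z, by rw [ind_of_mem hzeq, add_zero]; exact hzdom⟩
        have base : Z (fun x => f x + ind (Hp φ) x) + Z (fun x => f x + ind (Hm φ) x)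
            = Z f + Z (fun x => f x + ind (Hz φ) x) :=
          val_split Z hval hf φ ⟨x₁, hx₁, hx₁p⟩ ⟨x₂, hx₂, hx₂m⟩ hZex
        have hterm : ∀ J ∈ Jset m,
            Z (fun x => (f x + ind (Hp φ) x) ⊔ QJ q J x)
              + Z (fun x => (f x + ind (Hm φ) x) ⊔ QJ q J x)
            = Z (fun x => f x ⊔ QJ q J x)
              + Z (fun x => (f x + ind (Hz φ) x) ⊔ QJ q J x) := by
          intro J hJmem
          have hJ : J.Nonempty := (Finset.mem_filter.1 hJmem).2
          have hgCls : (fun x => f x ⊔ QJ q J x) ∈ Cls n := cls_sup_QJ hqc hqi hf hJ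
          have hwp : ∃ x, (f x ⊔ QJ q J x) ≠ ⊤ ∧ x ∈ Hp φ :=
            ⟨x₁, fun h => hx₁ ((sup_QJ_top_iff hJ x₁).1 h), hx₁p⟩
          have hwm : ∃ x, (f x ⊔ QJ q J x) ≠ ⊤ ∧ x ∈ Hm φ :=
            ⟨x₂, fun h => hx₂ ((sup_QJ_top_iff hJ x₂).1 h), hx₂m⟩
          have hwz : ∃ x, (f x ⊔ QJ q J x) ≠ ⊤ ∧ x ∈ Hz φ :=
            ⟨z, fun h => hzdom ((sup_QJ_top_iff hJ z).1 h), hzeq⟩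
          have hv := val_split Z hval hgCls φ hwp hwm hwz
          rw [← sup_QJ_add_ind_comm hnb (Hp φ), ← sup_QJ_add_ind_comm hnb (Hm φ),
            ← sup_QJ_add_ind_comm hnb (Hz φ)] at hv
          exact hv
        unfold Dv
        rw [if_pos hfC, if_pos hfpC, if_pos hfmC, if_pos hfzC]
        dsimp only
        have hsum : ∑ J ∈ Jset m, sgn J * Z (fun x => (f x + ind (Hp φ) x) ⊔ QJ q J x)
              + ∑ J ∈ Jset m, sgn J * Z (fun x => (f x + ind (Hm φ) x) ⊔ QJ q J x)
              - ∑ J ∈ Jset m, sgn J * Z (fun x => (f x + ind (Hz φ) x) ⊔ QJ q J x)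
            = ∑ J ∈ Jset m, sgn J * Z (fun x => f x ⊔ QJ q J x) := by
          rw [← Finset.sum_add_distrib, ← Finset.sum_sub_distrib]
          apply Finset.sum_congr rfl
          intro J hJmem
          linear_combination (sgn J) * (hterm J hJmem)
        linarith [base, hsum]
      · -- no domain point on the `≤ 0` side
        push_neg at hM
        have hfm_top : ∀ x, f x + ind (Hm φ) x = ⊤ := fun x => by
          by_cases hx : f x = ⊤
          · rw [hx]; exact EReal.top_add_of_ne_bot (ind_ne_bot _ x)
          · rw [ind_of_not_mem (hM x hx)]; exact EReal.add_top_of_ne_bot (hnb x)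
        have hfz_top : ∀ x, f x + ind (Hz φ) x = ⊤ := fun x => by
          by_cases hx : f x = ⊤
          · rw [hx]; exact EReal.top_add_of_ne_bot (ind_ne_bot _ x)
          · rw [ind_of_not_mem (fun hmem : x ∈ Hz φ => hM x hx hmem.le)]
            exact EReal.add_top_of_ne_bot (hnb x)
        have hfp_eq : (fun x => f x + ind (Hp φ) x) = f := by
          funext x
          by_cases hx : f x = ⊤
          · rw [hx, EReal.top_add_of_ne_bot (ind_ne_bot _ x)]
          · have hlt : (0:ℝ) < aev φ x := not_le.1 fun hle => hM x hx hle
            rw [ind_of_mem (show x ∈ Hp φ from hlt.le), add_zero]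
        rw [Dv_improper Z hfm_top, Dv_improper Z hfz_top, hfp_eq]
        ring
    · -- no domain point on the `≥ 0` side
      push_neg at hP
      have hfp_top : ∀ x, f x + ind (Hp φ) x = ⊤ := fun x => by
        by_cases hx : f x = ⊤
        · rw [hx]; exact EReal.top_add_of_ne_bot (ind_ne_bot _ x)
        · rw [ind_of_not_mem (hP x hx)]; exact EReal.add_top_of_ne_bot (hnb x)
      have hfz_top : ∀ x, f x + ind (Hz φ) x = ⊤ := fun x => by
        by_cases hx : f x = ⊤
        · rw [hx]; exact EReal.top_add_of_ne_bot (ind_ne_bot _ x)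
        · rw [ind_of_not_mem (fun hmem : x ∈ Hz φ => hP x hx hmem.ge)]
          exact EReal.add_top_of_ne_bot (hnb x)
      have hfm_eq : (fun x => f x + ind (Hm φ) x) = f := by
        funext x
        by_cases hx : f x = ⊤
        · rw [hx, EReal.top_add_of_ne_bot (ind_ne_bot _ x)]
        · have hlt : aev φ x < 0 := not_le.1 fun hle => hP x hx hle
          rw [ind_of_mem (show x ∈ Hm φ from hlt.le), add_zero]
      rw [Dv_improper Z hfp_top, Dv_improper Z hfz_top, hfm_eq]
      ring

lemma list_min {α : Type*} (R : α → α → Prop) (htot : ∀ a b, R a b ∨ R b a)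
    (htrans : ∀ a b c, R a b → R b c → R a c) :
    ∀ l : List α, l ≠ [] → ∃ a ∈ l, ∀ b ∈ l, R a b := by
  intro l
  induction l with
  | nil => intro h; exact absurd rfl h
  | cons x t ih =>
    intro _
    by_cases ht : t = []
    · subst ht
      refine ⟨x, List.mem_cons_self, fun b hb => ?_⟩
      rcases List.mem_singleton.1 hb with rfl
      rcases htot b b with h | h <;> exact h
    · obtain ⟨a, ha, hall⟩ := ih ht
      rcases htot x a with h | h
      · refine ⟨x, List.mem_cons_self, fun b hb => ?_⟩
        rcases List.mem_cons.1 hb with rfl | hb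
        · rcases htot b b with h' | h' <;> exact h'
        · exact htrans _ _ _ h (hall b hb)
      · refine ⟨a, List.mem_cons_of_mem x ha, fun b hb => ?_⟩
        rcases List.mem_cons.1 hb with rfl | hb
        · exact h
        · exact hall b hb

lemma exists_min_fin {m : ℕ} (hm : 0 < m) (R : Fin m → Fin m → Prop)
    (htot : ∀ a b, R a b ∨ R b a) (htrans : ∀ a b c, R a b → R b c → R a c) :
    ∃ j₀, ∀ j, R j₀ j := by
  have hne : List.finRange m ≠ [] := by
    intro h
    have := List.mem_finRange (⟨0, hm⟩ : Fin m)
    rw [h] at this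
    exact absurd this List.not_mem_nil
  obtain ⟨a, _, hall⟩ := list_min R htot htrans (List.finRange m) hne
  exact ⟨a, fun j => hall j (List.mem_finRange j)⟩

lemma term_zero (hm : 0 < m) {f : Vn n → EReal}
    (hbelf : ∀ x, f x ≠ ⊤ → ∃ j, ((q j x : ℝ) : EReal) ≤ f x)
    (hsorted : ∀ i j : Fin m, (∀ x, f x ≠ ⊤ → q i x ≤ q j x) ∨ (∀ x, f x ≠ ⊤ → q j x ≤ q i x)) :
    Dv Z q f = 0 := by
  unfold Dv
  by_cases hfC : f ∈ ConvSet n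
  swap
  · rw [if_neg hfC]
  rw [if_pos hfC]
  obtain ⟨j₀, hj₀⟩ := exists_min_fin hm (fun i j => ∀ x, f x ≠ ⊤ → q i x ≤ q j x)
    hsorted (fun a b c hab hbc x hx => (hab x hx).trans (hbc x hx))
  have hQmin : ∀ J : Finset (Fin m), J.Nonempty →
      (fun x => f x ⊔ QJ q (insert j₀ J) x) = (fun x => f x ⊔ QJ q J x) := by
    intro J hJ
    funext x
    by_cases hx : f x = ⊤
    · rw [hx, top_sup_eq, top_sup_eq]
    · have hins : QJ q (insert j₀ J) x = QJ q J x := by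
        unfold QJ
        rw [Finset.sup_insert]
        refine sup_eq_right.2 ?_
        obtain ⟨j, hj⟩ := hJ
        calc ((q j₀ x : ℝ) : EReal) ≤ ((q j x : ℝ) : EReal) := by
              exact_mod_cast hj₀ j x hx
          _ ≤ _ := Finset.le_sup (f := fun j => ((q j x : ℝ) : EReal)) hj
      rw [hins]
  have hsingle : (fun x => f x ⊔ QJ q {j₀} x) = f := by
    funext x
    by_cases hx : f x = ⊤
    · rw [hx, top_sup_eq]
    · obtain ⟨j, hj⟩ := hbelf x hx
      have hle : QJ q {j₀} x ≤ f x := by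
        unfold QJ
        rw [Finset.sup_singleton]
        calc ((q j₀ x : ℝ) : EReal) ≤ ((q j x : ℝ) : EReal) := by
              exact_mod_cast hj₀ j x hx
          _ ≤ f x := hj
      exact sup_eq_left.2 hle
  have hrw : ∑ J ∈ Jset m, sgn J * Z (fun x => f x ⊔ QJ q J x)
      = ∑ J ∈ (Finset.univ : Finset (Fin m)).powerset,
          (if J.Nonempty then sgn J * Z (fun x => f x ⊔ QJ q J x) else 0) :=
    (Finset.sum_filter _ _)
  rw [hrw]
  have huniv : (Finset.univ : Finset (Fin m)) = insert j₀ (Finset.univ.erase j₀) :=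
    (Finset.insert_erase (Finset.mem_univ j₀)).symm
  rw [huniv, Finset.sum_powerset_insert (Finset.notMem_erase j₀ _), ← Finset.sum_add_distrib]
  have hcongr : ∀ t ∈ (Finset.univ.erase j₀).powerset,
      ((if t.Nonempty then sgn t * Z (fun x => f x ⊔ QJ q t x) else 0)
        + (if (insert j₀ t).Nonempty then sgn (insert j₀ t) * Z (fun x => f x ⊔ QJ q (insert j₀ t) x) else 0))
      = (if t = ∅ then Z f else 0) := by
    intro t htmem
    have hj₀t : j₀ ∉ t := fun h =>
      Finset.notMem_erase j₀ _ (Finset.mem_powerset.1 htmem h)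
    by_cases hte : t = ∅
    · subst hte
      rw [if_neg (by simp), if_pos (by simp), if_pos rfl]
      have : (insert j₀ (∅ : Finset (Fin m))) = {j₀} := rfl
      rw [this, hsingle]
      simp [sgn]
    · have htne : t.Nonempty := Finset.nonempty_of_ne_empty hte
      rw [if_pos htne, if_pos (Finset.insert_nonempty j₀ t), if_neg hte, hQmin t htne]
      have hcard : (insert j₀ t).card = t.card + 1 := Finset.card_insert_of_notMem hj₀t
      have hsgn : sgn (insert j₀ t) = -sgn t := by
        unfold sgn
        rw [hcard]
        have h1 : t.card + 1 - 1 = (t.card - 1) + 1 := by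
          have := Finset.card_pos.2 htne
          omega
        rw [h1, pow_succ]
        ring
      rw [hsgn]
      ring
  rw [Finset.sum_congr rfl hcongr, Finset.sum_ite_eq' _ (∅ : Finset (Fin m)) (fun _ => Z f),
    if_pos (Finset.empty_mem_powerset _)]
  ring

/-- `ψ` has constant sign on the domain of `f`. -/
def ConstSgn (f : Vn n → EReal) (ψ : Aff n) : Prop :=
  (∀ x, f x ≠ ⊤ → 0 ≤ aev ψ x) ∨ (∀ x, f x ≠ ⊤ → aev ψ x ≤ 0)

lemma constSgn_mono {f g : Vn n → EReal} (hdom : ∀ x, g x ≠ ⊤ → f x ≠ ⊤) {ψ : Aff n} :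
    ConstSgn f ψ → ConstSgn g ψ := by
  rintro (h | h)
  · exact Or.inl fun x hx => h x (hdom x hx)
  · exact Or.inr fun x hx => h x (hdom x hx)

lemma rec_zero (hval : IsValuation (ConvSet n) Z) (hm : 0 < m)
    (A : Fin m → Finset (Aff n)) (hA : ∀ j, (A j).Nonempty)
    (hq : ∀ j x, q j x = (A j).sup' (hA j) (fun p => aev p x))
    (w : Vn n → EReal)
    (hbel : ∀ x, ∃ j, ((q j x : ℝ) : EReal) ≤ w x) :
    ∀ (L : List (Aff n)) (f : Vn n → EReal), f ∈ Cls n →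
      (∀ x, f x = w x ∨ f x = ⊤) →
      (∀ j j' : Fin m, ∀ p ∈ A j, ∀ p' ∈ A j', psub p p' ∈ L ∨ ConstSgn f (psub p p')) →
      Dv Z q f = 0 := by
  have hqc : ∀ j, Continuous (q j) := fun j => by
    have hj : q j = fun x => (A j).sup' (hA j) (fun p => aev p x) := funext (hq j)
    rw [hj]
    exact cont_sup' (hA j) (fun p => aev_cont p)
  have hqi : ∀ j (x y : Vn n) (t : ℝ), 0 < t → t < 1 →
      q j (t • x + (1 - t) • y) ≤ t * q j x + (1 - t) * q j y := by
    intro j x y t ht ht'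
    rw [hq j _, hq j x, hq j y]
    exact ineq_sup' (hA j)
      (fun p a b s hs hs' => le_of_eq (aev_comb p a b s (1 - s) (by ring))) x y t ht ht'
  intro L
  induction L with
  | nil =>
    intro f hf hInv hH
    apply term_zero Z hm
    · intro x hx
      obtain ⟨j, hj⟩ := hbel x
      rcases hInv x with h | h
      · exact ⟨j, by rw [h]; exact hj⟩
      · exact absurd h hx
    · intro i j
      by_cases hij : ∀ x, f x ≠ ⊤ → q i x ≤ q j x
      · exact Or.inl hij
      · right
        push_neg at hij
        obtain ⟨x₀, hx₀dom, hx₀lt⟩ := hij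
        intro x hxdom
        obtain ⟨b, hbmem, hbeq⟩ := Finset.exists_mem_eq_sup' (hA j) (fun p => aev p x)
        obtain ⟨a, hamem, haeq⟩ := Finset.exists_mem_eq_sup' (hA i) (fun p => aev p x₀)
        have hb0 : aev b x₀ ≤ q j x₀ := by
          rw [hq j x₀]; exact Finset.le_sup' (fun p => aev p x₀) hbmem
        have ha0 : q i x₀ = aev a x₀ := by rw [hq i x₀, haeq]
        have hlt : aev (psub b a) x₀ < 0 := by
          rw [aev_psub]
          have := hx₀lt
          rw [ha0] at this
          linarith
        rcases hH j i b hbmem a hamem with habs | hcs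
        · exact absurd habs List.not_mem_nil
        · rcases hcs with hpos | hneg
          · exact absurd (hpos x₀ hx₀dom) (not_le.2 hlt)
          · have h1 : aev b x ≤ aev a x := by
              have := hneg x hxdom
              rw [aev_psub] at this
              linarith
            have h2 : aev a x ≤ q i x := by
              rw [hq i x]; exact Finset.le_sup' (fun p => aev p x) hamem
            calc q j x = aev b x := by rw [hq j x, hbeq]
              _ ≤ q i x := h1.trans h2
  | cons φ L' ih =>
    intro f hf hInv hH
    rw [cut Z hval hqc hqi hf φ]
    have hside : ∀ s : Set (Vn n), Convex ℝ s → IsClosed s →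
        ((fun x => f x + ind s x) ∈ Cls n
          ∧ (∀ x, (f x + ind s x) = w x ∨ (f x + ind s x) = ⊤)
          ∧ ∀ x, (f x + ind s x) ≠ ⊤ → (f x ≠ ⊤ ∧ x ∈ s)) := by
      intro s hconv hcl
      refine ⟨cls_add_ind hf hconv hcl, ?_, ?_⟩
      · intro x
        by_cases hx : x ∈ s
        · rw [ind_of_mem hx, add_zero]; exact hInv x
        · rw [ind_of_not_mem hx, EReal.add_top_of_ne_bot (hf.2.2 x)]; exact Or.inr rfl
      · intro x hx
        by_cases hxs : x ∈ s
        · refine ⟨fun hfx => hx ?_, hxs⟩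
          rw [hfx]
          exact EReal.top_add_of_ne_bot (ind_ne_bot s x)
        · exact absurd (by rw [ind_of_not_mem hxs]; exact EReal.add_top_of_ne_bot (hf.2.2 x)) hx
    have hHside : ∀ s : Set (Vn n),
        (∀ x, (f x + ind s x) ≠ ⊤ → (f x ≠ ⊤ ∧ x ∈ s)) →
        (∀ x, x ∈ s → ConstSgn (fun y => f y + ind s y) φ → True) →  -- dummy
        True := fun _ _ _ => trivial
    -- the three recursive calls
    have hφP : ConstSgn (fun x => f x + ind (Hp φ) x) φ := by
      refine Or.inl fun x hx => ?_
      exact ((hside (Hp φ) (convex_Hp φ) (closed_Hp φ)).2.2 x hx).2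
    have hφM : ConstSgn (fun x => f x + ind (Hm φ) x) φ := by
      refine Or.inr fun x hx => ?_
      exact ((hside (Hm φ) (convex_Hm φ) (closed_Hm φ)).2.2 x hx).2
    have hφZ : ConstSgn (fun x => f x + ind (Hz φ) x) φ := by
      refine Or.inl fun x hx => ?_
      exact ((hside (Hz φ) (convex_Hz φ) (closed_Hz φ)).2.2 x hx).2.ge
    have hnewH : ∀ (s : Set (Vn n)),
        (∀ x, (f x + ind s x) ≠ ⊤ → (f x ≠ ⊤ ∧ x ∈ s)) →
        ConstSgn (fun x => f x + ind s x) φ →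
        (∀ j j' : Fin m, ∀ p ∈ A j, ∀ p' ∈ A j',
          psub p p' ∈ L' ∨ ConstSgn (fun x => f x + ind s x) (psub p p')) := by
      intro s hdom hφs j j' p hp p' hp'
      rcases hH j j' p hp p' hp' with hmem | hcs
      · rcases List.mem_cons.1 hmem with heq | hmem'
        · rw [heq]; exact Or.inr hφs
        · exact Or.inl hmem'
      · exact Or.inr (constSgn_mono (fun x hx => (hdom x hx).1) hcs)
    rw [ih _ (hside (Hp φ) (convex_Hp φ) (closed_Hp φ)).1
        (hside (Hp φ) (convex_Hp φ) (closed_Hp φ)).2.1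
        (hnewH (Hp φ) (hside (Hp φ) (convex_Hp φ) (closed_Hp φ)).2.2 hφP),
      ih _ (hside (Hm φ) (convex_Hm φ) (closed_Hm φ)).1
        (hside (Hm φ) (convex_Hm φ) (closed_Hm φ)).2.1
        (hnewH (Hm φ) (hside (Hm φ) (convex_Hm φ) (closed_Hm φ)).2.2 hφM),
      ih _ (hside (Hz φ) (convex_Hz φ) (closed_Hz φ)).1
        (hside (Hz φ) (convex_Hz φ) (closed_Hz φ)).2.1
        (hnewH (Hz φ) (hside (Hz φ) (convex_Hz φ) (closed_Hz φ)).2.2 hφZ)]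
    ring

/-- The combinatorial core: inclusion–exclusion for families `w ⊔ (piecewise affine)`. -/
theorem core (hval : IsValuation (ConvSet n) Z) (hm : 0 < m)
    (A : Fin m → Finset (Aff n)) (hA : ∀ j, (A j).Nonempty)
    (hq : ∀ j x, q j x = (A j).sup' (hA j) (fun p => aev p x))
    (w : Vn n → EReal) (hw : w ∈ ConvSet n)
    (hbel : ∀ x, ∃ j, ((q j x : ℝ) : EReal) ≤ w x) :
    Z w = ∑ J ∈ Jset m, sgn J * Z (fun x => w x ⊔ QJ q J x) := by
  set P : Finset (Aff n) := Finset.univ.biUnion A with hP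
  set L : List (Aff n) := ((P ×ˢ P).toList).map (fun pp => psub pp.1 pp.2) with hL
  have hmemL : ∀ j j' : Fin m, ∀ p ∈ A j, ∀ p' ∈ A j', psub p p' ∈ L ∨ ConstSgn w (psub p p') := by
    intro j j' p hp p' hp'
    left
    rw [hL]
    refine List.mem_map.2 ⟨(p, p'), ?_, rfl⟩
    rw [Finset.mem_toList]
    exact Finset.mem_product.2 ⟨Finset.mem_biUnion.2 ⟨j, Finset.mem_univ j, hp⟩,
      Finset.mem_biUnion.2 ⟨j', Finset.mem_univ j', hp'⟩⟩
  have h0 := rec_zero Z hval hm A hA hq w hbel L w (mem_ConvSet_iff.1 hw).1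
    (fun x => Or.inl rfl) hmemL
  unfold Dv at h0
  rw [if_pos hw] at h0
  linarith

end Core

/-! ### Analytic part : affine minorants of convex lsc functions -/

section Minorant

def epiSet (u : Vn n → EReal) : Set (Vn n × ℝ) := {p | u p.1 ≤ (p.2 : EReal)}

def IsMinorant (u : Vn n → EReal) (ℓ : Aff n) : Prop := ∀ x, ((aev ℓ x : ℝ) : EReal) ≤ u x

lemma epi_convex {u : Vn n → EReal} (hu : IsConvexFn u) : Convex ℝ (epiSet u) := by
  intro p hp q hq a b ha hb hab
  have hp' : u p.1 ≤ (p.2 : EReal) := hp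
  have hq' : u q.1 ≤ (q.2 : EReal) := hq
  show u (a • p + b • q).1 ≤ (((a • p + b • q).2 : ℝ) : EReal)
  have h1 : (a • p + b • q).1 = a • p.1 + b • q.1 := rfl
  have h2 : (a • p + b • q).2 = a * p.2 + b * q.2 := rfl
  rw [h1, h2]
  rcases eq_or_lt_of_le ha with ha0 | ha0
  · have hb1 : b = 1 := by linarith
    rw [← ha0, hb1, zero_smul, one_smul, zero_add, zero_mul, one_mul, zero_add]
    exact hq'
  rcases eq_or_lt_of_le hb with hb0 | hb0
  · have ha1 : a = 1 := by linarith
    rw [← hb0, ha1, zero_smul, one_smul, add_zero, zero_mul, one_mul, add_zero]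
    exact hp'
  · have hb' : b = 1 - a := by linarith
    have ha1 : a < 1 := by linarith
    subst hb'
    calc u (a • p.1 + (1 - a) • q.1) ≤ (a : EReal) * u p.1 + ((1 - a : ℝ) : EReal) * u q.1 :=
          hu p.1 q.1 a ha0 ha1
      _ ≤ (a : EReal) * (p.2 : EReal) + ((1 - a : ℝ) : EReal) * (q.2 : EReal) :=
          comb_le_comb hp' hq' ha0.le (by linarith)
      _ = ((a * p.2 + (1 - a) * q.2 : ℝ) : EReal) := coe_comb _ _ _ _

lemma epi_closed {u : Vn n → EReal} (hl : LowerSemicontinuous u) : IsClosed (epiSet u) := by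
  rw [← isOpen_compl_iff, isOpen_iff_mem_nhds]
  intro p hp
  have hp' : (p.2 : EReal) < u p.1 := not_le.1 hp
  obtain ⟨c, hc1, hc2⟩ := EReal.lt_iff_exists_real_btwn.1 hp'
  have h1 : ∀ᶠ x in 𝓝 p.1, (c : EReal) < u x := hl p.1 (c : EReal) hc2
  have h2 : Set.Iio c ∈ 𝓝 p.2 := Iio_mem_nhds (by exact_mod_cast hc1)
  rw [nhds_prod_eq]
  filter_upwards [Filter.prod_mem_prod h1 h2] with q hq
  show ¬ u q.1 ≤ (q.2 : EReal)
  push_neg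
  exact lt_trans (by exact_mod_cast hq.2) hq.1

lemma epi_nonempty {u : Vn n → EReal} (hu : u ∈ ConvSet n) :
    ∃ x₀ r₀, ((x₀, r₀) : Vn n × ℝ) ∈ epiSet u := by
  obtain ⟨x, hx⟩ := hu.2.2.2
  have hnb := hu.2.2.1 x
  lift u x to ℝ using ⟨hx, hnb⟩ with r hr
  exact ⟨x, r, by show u x ≤ ((r : ℝ) : EReal); rw [← hr]⟩

lemma g_decomp (g : (Vn n × ℝ) →L[ℝ] ℝ) (x : Vn n) (t : ℝ) :
    g (x, t) = g (x, 0) + t * g (0, 1) := by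
  have h1 : ((x, t) : Vn n × ℝ) = (x, (0:ℝ)) + (t • ((0 : Vn n), (1:ℝ))) := by
    rw [Prod.smul_mk, smul_zero, smul_eq_mul, mul_one, Prod.mk_add_mk, add_zero, zero_add]
  rw [h1, map_add, g.map_smul, smul_eq_mul]

lemma vert_nonneg {u : Vn n → EReal} (g : (Vn n × ℝ) →L[ℝ] ℝ) (c : ℝ)
    (hsep : ∀ p ∈ epiSet u, c ≤ g p)
    {x₀ : Vn n} {r₀ : ℝ} (h₀ : (x₀, r₀) ∈ epiSet u) : 0 ≤ g (0, 1) := by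
  by_contra hneg
  push_neg at hneg
  set a := g ((0 : Vn n), (1:ℝ)) with hadef
  set K := g (x₀, (0:ℝ)) with hKdef
  set t₀ : ℝ := (c - 1 - K - r₀ * a) / a with ht₀
  set t₁ : ℝ := max 0 t₀ with ht₁
  have hmem : ((x₀, r₀ + t₁) : Vn n × ℝ) ∈ epiSet u := by
    show u x₀ ≤ ((r₀ + t₁ : ℝ) : EReal)
    refine le_trans h₀ ?_
    exact_mod_cast le_add_of_nonneg_right (le_max_left 0 t₀)
  have h := hsep _ hmem
  rw [g_decomp] at h
  have hmul : (r₀ + t₁) * a ≤ (r₀ + t₀) * a :=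
    mul_le_mul_of_nonpos_right (by linarith [le_max_right 0 t₀]) hneg.le
  have ht₀a : t₀ * a = c - 1 - K - r₀ * a := div_mul_cancel₀ _ hneg.ne
  nlinarith [h, hmul, ht₀a]

lemma convert_minorant {u : Vn n → EReal} (hnb : ∀ x, u x ≠ ⊥)
    (g : (Vn n × ℝ) →L[ℝ] ℝ) (c : ℝ) (hsep : ∀ p ∈ epiSet u, c ≤ g p)
    (ha : 0 < g (0, 1)) :
    ∃ ℓ : Aff n, IsMinorant u ℓ ∧ ∀ p : Vn n × ℝ, g p < c → p.2 < aev ℓ p.1 := by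
  set a := g ((0 : Vn n), (1:ℝ)) with hadef
  set lin : Vn n →L[ℝ] ℝ := g.comp (ContinuousLinearMap.inl ℝ (Vn n) ℝ) with hlin
  have hlineval : ∀ x, lin x = g (x, 0) := fun x => by
    rw [hlin]
    simp [ContinuousLinearMap.comp_apply, ContinuousLinearMap.inl_apply]
  refine ⟨((-(a⁻¹)) • lin, c / a), ?_, ?_⟩
  · intro x
    by_cases hx : u x = ⊤
    · rw [hx]; exact le_top
    · lift u x to ℝ using ⟨hx, hnb x⟩ with s hs
      have hmem : ((x, s) : Vn n × ℝ) ∈ epiSet u := by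
        show u x ≤ ((s : ℝ) : EReal); rw [← hs]
      have h := hsep _ hmem
      rw [g_decomp, ← hlineval] at h
      have h' : c ≤ lin x + s * a := h
      have hkey : aev ((-(a⁻¹)) • lin, c / a) x ≤ s := by
        unfold aev
        simp only [ContinuousLinearMap.coe_smul', Pi.smul_apply, smul_eq_mul]
        have h3 : -a⁻¹ * lin x + c / a = (c - lin x) / a := by
          rw [div_eq_mul_inv, div_eq_mul_inv]
          ring
        rw [h3, div_le_iff₀ ha]
        linarith [h']
      exact_mod_cast hkey
  · intro p hp
    rw [g_decomp, ← hlineval] at hp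
    have hp' : lin p.1 + p.2 * a < c := hp
    unfold aev
    simp only [ContinuousLinearMap.coe_smul', Pi.smul_apply, smul_eq_mul]
    have h3 : -a⁻¹ * lin p.1 + c / a = (c - lin p.1) / a := by
      rw [div_eq_mul_inv, div_eq_mul_inv]
      ring
    rw [h3, lt_div_iff₀ ha]
    linarith [hp']

lemma exists_base_minorant {u : Vn n → EReal} (hu : u ∈ ConvSet n) :
    ∃ ℓ₀ : Aff n, IsMinorant u ℓ₀ := by
  obtain ⟨x₁, hx₁⟩ := hu.2.2.2
  have hnb := hu.2.2.1
  lift u x₁ to ℝ using ⟨hx₁, hnb x₁⟩ with s₁ hs₁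
  have hp₁ : ((x₁, s₁ - 1) : Vn n × ℝ) ∉ epiSet u := by
    show ¬ u x₁ ≤ ((s₁ - 1 : ℝ) : EReal)
    rw [← hs₁]
    exact_mod_cast not_le.2 (sub_one_lt s₁)
  obtain ⟨g, c, hgc, hgt⟩ :=
    geometric_hahn_banach_point_closed (epi_convex hu.1) (epi_closed hu.2.1) hp₁
  have hsep : ∀ p ∈ epiSet u, c ≤ g p := fun p hp => (hgt p hp).le
  have hmem₁ : ((x₁, s₁) : Vn n × ℝ) ∈ epiSet u := by
    show u x₁ ≤ ((s₁ : ℝ) : EReal); rw [← hs₁]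
  have ha : 0 ≤ g (0, 1) := vert_nonneg g c hsep hmem₁
  rcases eq_or_lt_of_le ha with ha0 | ha0
  · exfalso
    have h1 := hgc
    have h2 := hgt _ hmem₁
    rw [g_decomp, ← ha0, mul_zero, add_zero] at h1 h2
    linarith
  · obtain ⟨ℓ, hℓ, _⟩ := convert_minorant hnb g c hsep ha0
    exact ⟨ℓ, hℓ⟩

lemma point_minorant {u : Vn n → EReal} (hu : u ∈ ConvSet n)
    (ℓ₀ : Aff n) (hℓ₀ : IsMinorant u ℓ₀)
    {p : Vn n × ℝ} (hp : p ∉ epiSet u) :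
    ∃ ℓ : Aff n, IsMinorant u ℓ ∧ p.2 < aev ℓ p.1 := by
  have hnb := hu.2.2.1
  obtain ⟨g, c, hgc, hgt⟩ :=
    geometric_hahn_banach_point_closed (epi_convex hu.1) (epi_closed hu.2.1) hp
  have hsep : ∀ q ∈ epiSet u, c ≤ g q := fun q hq => (hgt q hq).le
  obtain ⟨x₀, r₀, h₀⟩ := epi_nonempty hu
  have ha : 0 ≤ g (0, 1) := vert_nonneg g c hsep h₀
  set lin : Vn n →L[ℝ] ℝ := g.comp (ContinuousLinearMap.inl ℝ (Vn n) ℝ) with hlin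
  have hlineval : ∀ x, lin x = g (x, 0) := fun x => by
    rw [hlin]
    simp [ContinuousLinearMap.comp_apply, ContinuousLinearMap.inl_apply]
  rcases eq_or_lt_of_le ha with ha0 | ha0
  · -- vertical separation; amplify using ℓ₀
    have hplt : lin p.1 < c := by
      have := hgc
      rw [show p = (p.1, p.2) from rfl, g_decomp, ← ha0, mul_zero, add_zero, ← hlineval] at this
      exact this
    set pos := c - lin p.1 with hpos
    have hpos0 : 0 < pos := by rw [hpos]; linarith
    obtain ⟨k, hk⟩ := exists_nat_gt ((p.2 - aev ℓ₀ p.1) / pos)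
    refine ⟨(ℓ₀.1 - (k : ℝ) • lin, ℓ₀.2 + k * c), ?_, ?_⟩
    · intro x
      by_cases hx : u x = ⊤
      · rw [hx]; exact le_top
      · lift u x to ℝ using ⟨hx, hnb x⟩ with s hs
        have hmem : ((x, s) : Vn n × ℝ) ∈ epiSet u := by
          show u x ≤ ((s : ℝ) : EReal); rw [← hs]
        have h := hsep _ hmem
        rw [g_decomp, ← ha0, mul_zero, add_zero, ← hlineval] at h
        have hc0 : c - lin x ≤ 0 := by linarith
        have hev : aev (ℓ₀.1 - (k : ℝ) • lin, ℓ₀.2 + k * c) x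
            = aev ℓ₀ x + k * (c - lin x) := by
          unfold aev
          simp only [ContinuousLinearMap.sub_apply, ContinuousLinearMap.coe_smul',
            Pi.smul_apply, smul_eq_mul]
          ring
        have hle : aev (ℓ₀.1 - (k : ℝ) • lin, ℓ₀.2 + k * c) x ≤ aev ℓ₀ x := by
          rw [hev]
          have hk0 : (0:ℝ) ≤ (k:ℝ) := Nat.cast_nonneg k
          nlinarith [mul_nonneg hk0 (neg_nonneg.2 hc0)]
        calc ((aev (ℓ₀.1 - (k : ℝ) • lin, ℓ₀.2 + k * c) x : ℝ) : EReal)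
            ≤ ((aev ℓ₀ x : ℝ) : EReal) := by exact_mod_cast hle
          _ ≤ ((s : ℝ) : EReal) := by rw [hs]; exact hℓ₀ x
    · have hev : aev (ℓ₀.1 - (k : ℝ) • lin, ℓ₀.2 + k * c) p.1
          = aev ℓ₀ p.1 + k * pos := by
        unfold aev
        simp only [ContinuousLinearMap.sub_apply, ContinuousLinearMap.coe_smul',
          Pi.smul_apply, smul_eq_mul]
        rw [hpos]
        ring
      rw [hev]
      have : (p.2 - aev ℓ₀ p.1) < k * pos := by
        rw [div_lt_iff₀ hpos0] at hk
        linarith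
      linarith
  · obtain ⟨ℓ, hℓ, hstrict⟩ := convert_minorant hnb g c hsep ha0
    exact ⟨ℓ, hℓ, hstrict p hgc⟩

theorem exists_minorant_seq {u : Vn n → EReal} (hu : u ∈ ConvSet n) :
    ∃ Lm : ℕ → Aff n, (∀ i, IsMinorant u (Lm i)) ∧
      ∀ x (r : ℝ), (r : EReal) < u x → ∃ i, r < aev (Lm i) x := by
  obtain ⟨ℓ₀, hℓ₀⟩ := exists_base_minorant hu
  -- open cover of the complement of the epigraph
  set V : Aff n → Set (Vn n × ℝ) :=
    fun ℓ => if IsMinorant u ℓ then {p | p.2 < aev ℓ p.1} else ∅ with hV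
  have hVopen : ∀ ℓ, IsOpen (V ℓ) := by
    intro ℓ
    by_cases hm : IsMinorant u ℓ
    · rw [hV]
      dsimp only
      rw [if_pos hm]
      exact isOpen_lt continuous_snd ((aev_cont ℓ).comp continuous_fst)
    · rw [hV]
      dsimp only
      rw [if_neg hm]
      exact isOpen_empty
  obtain ⟨T, hTc, hTeq⟩ := TopologicalSpace.isOpen_iUnion_countable V hVopen
  have hTne : ({ℓ₀} ∪ T : Set (Aff n)).Nonempty := ⟨ℓ₀, Or.inl rfl⟩
  obtain ⟨Lm, hLm⟩ := Set.Countable.exists_eq_range ((Set.countable_singleton ℓ₀).union hTc)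
    hTne
  have hmem : ∀ i, Lm i ∈ ({ℓ₀} ∪ T : Set (Aff n)) := by
    intro i
    rw [hLm]
    exact Set.mem_range_self i
  refine ⟨fun i => if IsMinorant u (Lm i) then Lm i else ℓ₀, ?_, ?_⟩
  · intro i
    dsimp only
    split
    · assumption
    · exact hℓ₀
  · intro x r hr
    have hpnot : ((x, r) : Vn n × ℝ) ∉ epiSet u := by
      show ¬ u x ≤ ((r : ℝ) : EReal)
      exact not_le.2 hr
    obtain ⟨ℓ, hℓ, hℓx⟩ := point_minorant hu ℓ₀ hℓ₀ hpnot
    -- (x, r) belongs to the union of the V's, hence to the countable subcover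
    have hmem2 : ((x, r) : Vn n × ℝ) ∈ ⋃ ℓ', V ℓ' := by
      refine Set.mem_iUnion.2 ⟨ℓ, ?_⟩
      rw [hV]
      simp only [if_pos hℓ]
      exact hℓx
    rw [← hTeq] at hmem2
    obtain ⟨ℓ', hℓ'T, hℓ'mem⟩ := Set.mem_iUnion₂.1 hmem2
    have hℓ'min : IsMinorant u ℓ' := by
      by_contra hcon
      rw [hV] at hℓ'mem
      simp only [if_neg hcon] at hℓ'mem
      exact hℓ'mem
    have hℓ'lt : r < aev ℓ' x := by
      rw [hV] at hℓ'mem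
      simp only [if_pos hℓ'min] at hℓ'mem
      exact hℓ'mem
    -- ℓ' is in the range of Lm
    have : ℓ' ∈ Set.range Lm := by rw [← hLm]; exact Or.inr hℓ'T
    obtain ⟨i, hi⟩ := this
    refine ⟨i, ?_⟩
    dsimp only
    rw [hi, if_pos hℓ'min]
    exact hℓ'lt

end Minorant

/-! ### epi-convergence of monotone sequences -/

lemma epi_of_monotone (v : ℕ → Vn n → EReal) (V : Vn n → EReal)
    (hmono : ∀ k x, v k x ≤ v (k + 1) x)
    (hlsc : ∀ k, LowerSemicontinuous (v k))
    (hsup : ∀ x, (⨆ k, v k x) = V x) :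
    EpiConverges v V := by
  have hmono' : ∀ x, Monotone (fun k => v k x) :=
    fun x => monotone_nat_of_le_succ (fun k => hmono k x)
  intro x
  constructor
  · intro xk hxk
    rw [← hsup x]
    refine iSup_le fun K => ?_
    rw [Filter.le_liminf_iff]
    intro y hy
    have hev1 : ∀ᶠ k in atTop, y < v K (xk k) := hxk.eventually (hlsc K x y hy)
    have hev2 : ∀ᶠ k in atTop, K ≤ k := eventually_ge_atTop K
    filter_upwards [hev1, hev2] with k h1 h2
    exact lt_of_lt_of_le h1 (hmono' (xk k) h2)
  · refine ⟨fun _ => x, tendsto_const_nhds, ?_⟩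
    rw [← hsup x]
    exact tendsto_atTop_iSup (hmono' x)

end IEaux


/-- **Inclusion-exclusion principle** (Theorem 3.1): a continuous valuation
`Z` on `Conv(ℝⁿ)` satisfies
`Z(u₁ ∧ ⋯ ∧ u_m) = Σ_{∅ ≠ J ⊆ {1,…,m}} (−1)^{|J|−1} Z(⋁_{j ∈ J} u_j)`
whenever all the functions involved belong to `Conv(ℝⁿ)`.
(Here `Finset.inf`/`Finset.sup` of the values give the pointwise minimum and
maximum.) -/
theorem inclusion_exclusion (n : ℕ) (Z : (Vn n → EReal) → ℝ)
    (hcont : ContinuousVal (ConvSet n) Z)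
    (hval : IsValuation (ConvSet n) Z)
    (m : ℕ) (u : Fin m → Vn n → EReal)
    (hu : ∀ j, u j ∈ ConvSet n)
    (hmin : (fun x => Finset.univ.inf (fun j => u j x)) ∈ ConvSet n)
    (hmax : ∀ J : Finset (Fin m), J.Nonempty →
      (fun x => J.sup (fun j => u j x)) ∈ ConvSet n) :
    Z (fun x => Finset.univ.inf (fun j => u j x)) =
      ∑ J ∈ Finset.univ.powerset.filter (fun J : Finset (Fin m) => J.Nonempty),
        (-1 : ℝ) ^ (J.card - 1) * Z (fun x => J.sup (fun j => u j x)) := by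
  
  classical
  rcases Nat.eq_zero_or_pos m with hm0 | hm
  · exfalso
    subst hm0
    obtain ⟨x, hx⟩ := hmin.2.2.2
    exact hx (by simp)
  have hFinNe : Nonempty (Fin m) := ⟨⟨0, hm⟩⟩
  set w : Vn n → EReal := fun x => Finset.univ.inf (fun j => u j x) with hwdef
  -- minorant sequences
  choose Lm hLm1 hLm2 using fun j => IEaux.exists_minorant_seq (hu j)
  -- approximating finsets of affine functions and piecewise-affine functions
  set A : ℕ → Fin m → Finset (IEaux.Aff n) :=
    fun k j => (Finset.range (k + 1)).image (Lm j) with hAdef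
  have hA : ∀ k j, (A k j).Nonempty :=
    fun k j => (Finset.nonempty_range_add_one).image _
  set q : ℕ → Fin m → Vn n → ℝ :=
    fun k j x => (A k j).sup' (hA k j) (fun p => IEaux.aev p x) with hqdef
  have hq : ∀ k j x, q k j x = (A k j).sup' (hA k j) (fun p => IEaux.aev p x) :=
    fun k j x => rfl
  -- basic properties of q
  have hqle : ∀ k j x, ((q k j x : ℝ) : EReal) ≤ u j x := by
    intro k j x
    obtain ⟨p, hpmem, hpeq⟩ := Finset.exists_mem_eq_sup' (hA k j) (fun p => IEaux.aev p x)
    rw [hq k j x, hpeq]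
    obtain ⟨i, _, rfl⟩ := Finset.mem_image.1 hpmem
    exact hLm1 j i x
  have hqmono : ∀ k j x, q k j x ≤ q (k + 1) j x := by
    intro k j x
    exact Finset.sup'_mono (fun p => IEaux.aev p x)
      (Finset.image_subset_image (Finset.range_subset_range.2 (by omega))) (hA k j)
  have hqsup : ∀ j x, (⨆ k, ((q k j x : ℝ) : EReal)) = u j x := by
    intro j x
    refine le_antisymm (iSup_le fun k => hqle k j x) ?_
    by_contra hcon
    push_neg at hcon
    obtain ⟨r, hr1, hr2⟩ := EReal.lt_iff_exists_real_btwn.1 hcon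
    obtain ⟨i, hi⟩ := hLm2 j x r hr2
    have hle1 : IEaux.aev (Lm j i) x ≤ q i j x := by
      rw [hq i j x]
      exact Finset.le_sup' (fun p => IEaux.aev p x)
        (Finset.mem_image.2 ⟨i, Finset.self_mem_range_succ i, rfl⟩)
    have : (r : EReal) < ((q i j x : ℝ) : EReal) := by exact_mod_cast lt_of_lt_of_le hi hle1
    exact absurd (lt_of_lt_of_le this (le_iSup (fun k => ((q k j x : ℝ) : EReal)) i)) (not_lt.2 hr1.le)
  -- the minimum bound
  have hbel : ∀ k x, ∃ j, ((q k j x : ℝ) : EReal) ≤ w x := by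
    intro k x
    obtain ⟨j₀, _, hj₀⟩ := Finset.exists_mem_eq_inf (Finset.univ : Finset (Fin m))
      Finset.univ_nonempty (fun j => u j x)
    exact ⟨j₀, by rw [hwdef]; dsimp only; rw [hj₀]; exact hqle k j₀ x⟩
  -- CORE identity at each level k
  have hcore : ∀ k, Z w = ∑ J ∈ IEaux.Jset m, IEaux.sgn J * Z (fun x => w x ⊔ IEaux.QJ (q k) J x) :=
    fun k => IEaux.core Z hval hm (A k) (hA k) (hq k) w hmin (hbel k)
  -- continuity data for each nonempty J
  have hwCls : w ∈ IEaux.Cls n := (IEaux.mem_ConvSet_iff.1 hmin).1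
  have hqc : ∀ k j, Continuous (q k j) := fun k j =>
    IEaux.cont_sup' (hA k j) (fun p => IEaux.aev_cont p)
  have hqi : ∀ k j (x y : Vn n) (t : ℝ), 0 < t → t < 1 →
      q k j (t • x + (1 - t) • y) ≤ t * q k j x + (1 - t) * q k j y := by
    intro k j x y t ht ht'
    exact IEaux.ineq_sup' (hA k j)
      (fun p a b s hs hs' => le_of_eq (IEaux.aev_comb p a b s (1 - s) (by ring))) x y t ht ht'
  have hlim : ∀ J ∈ IEaux.Jset m,
      Tendsto (fun k => Z (fun x => w x ⊔ IEaux.QJ (q k) J x)) atTop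
        (𝓝 (Z (fun x => J.sup (fun j => u j x)))) := by
    intro J hJmem
    have hJ : J.Nonempty := (Finset.mem_filter.1 hJmem).2
    have hmemk : ∀ k, (fun x => w x ⊔ IEaux.QJ (q k) J x) ∈ ConvSet n := by
      intro k
      refine IEaux.mem_ConvSet_iff.2 ⟨IEaux.cls_sup_QJ (hqc k) (hqi k) hwCls hJ, ?_⟩
      obtain ⟨x₀, hx₀⟩ := hmin.2.2.2
      exact ⟨x₀, fun h => hx₀ ((IEaux.sup_QJ_top_iff hJ x₀).1 h)⟩
    have hVmem : (fun x => J.sup (fun j => u j x)) ∈ ConvSet n := hmax J hJ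
    have hepi : EpiConverges (fun k => fun x => w x ⊔ IEaux.QJ (q k) J x)
        (fun x => J.sup (fun j => u j x)) := by
      apply IEaux.epi_of_monotone
      · intro k x
        refine sup_le le_sup_left (le_trans ?_ le_sup_right)
        refine Finset.sup_mono_fun fun j hj => ?_
        exact_mod_cast hqmono k j x
      · intro k
        exact (IEaux.cls_sup_QJ (hqc k) (hqi k) hwCls hJ).2.1
      · intro x
        have hstepA : (⨆ k, (w x ⊔ IEaux.QJ (q k) J x)) = w x ⊔ (⨆ k, IEaux.QJ (q k) J x) := by
          refine le_antisymm (iSup_le fun k =>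
            sup_le le_sup_left (le_trans (le_iSup (fun k => IEaux.QJ (q k) J x) k) le_sup_right)) ?_
          refine sup_le ?_ ?_
          · exact le_trans le_sup_left (le_iSup (fun k => w x ⊔ IEaux.QJ (q k) J x) 0)
          · refine iSup_le fun k => ?_
            exact le_trans le_sup_right (le_iSup (fun k => w x ⊔ IEaux.QJ (q k) J x) k)
        have hstepB : (⨆ k, IEaux.QJ (q k) J x) = J.sup (fun j => u j x) := by
          refine le_antisymm ?_ ?_
          · refine iSup_le fun k => ?_
            refine Finset.sup_mono_fun fun j hj => hqle k j x
          · refine Finset.sup_le fun j hj => ?_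
            rw [← hqsup j x]
            refine iSup_le fun k => ?_
            exact le_trans (Finset.le_sup (f := fun j => ((q k j x : ℝ) : EReal)) hj)
              (le_iSup (fun k => IEaux.QJ (q k) J x) k)
        have hstepC : w x ⊔ J.sup (fun j => u j x) = J.sup (fun j => u j x) := by
          refine sup_eq_right.2 ?_
          obtain ⟨j₀, hj₀⟩ := hJ
          exact le_trans (Finset.inf_le (Finset.mem_univ j₀))
            (Finset.le_sup (f := fun j => u j x) hj₀)
        rw [hstepA, hstepB, hstepC]
    exact hcont _ _ hmemk hVmem hepi
  -- pass to the limit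
  have hsumlim : Tendsto
      (fun k => ∑ J ∈ IEaux.Jset m, IEaux.sgn J * Z (fun x => w x ⊔ IEaux.QJ (q k) J x)) atTop
      (𝓝 (∑ J ∈ IEaux.Jset m, IEaux.sgn J * Z (fun x => J.sup (fun j => u j x)))) := by
    refine tendsto_finset_sum _ fun J hJmem => ?_
    exact (hlim J hJmem).const_mul _
  have hconst : Tendsto
      (fun _ : ℕ => Z w) atTop (𝓝 (Z w)) := tendsto_const_nhds
  have : Z w = ∑ J ∈ IEaux.Jset m, IEaux.sgn J * Z (fun x => J.sup (fun j => u j x)) := by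
    refine tendsto_nhds_unique ?_ hsumlim
    have : (fun k => ∑ J ∈ IEaux.Jset m, IEaux.sgn J * Z (fun x => w x ⊔ IEaux.QJ (q k) J x))
        = fun _ => Z w := funext fun k => (hcore k).symm
    rw [this]
    exact tendsto_const_nhds
  exact this
end
end
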